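/- arXiv:2104.13505 — 3 statements merged into one kernel-verified Lean document; each statement's English description precedes it below -/
import Mathlib

section
/- If ⌊N/2⌋ ≥ R(7,7) (the Ramsey number), then f(2,N) ≤ ⌊N/2⌋ + 4. -/
open Finset

/-- The elements of `S` on the `A` side (left side). -/
def sideA {N : ℕ} (S : Finset (Fin N ⊕ Fin N)) : Finset (Fin N ⊕ Fin N) :=
  S.filter (fun x => x.isLeft)

/-- The elements of `S` on the `B` side (right side). -/
def sideB {N : ℕ} (S : Finset (Fin N ⊕ Fin N)) : Finset (Fin N ⊕ Fin N) :=
  S.filter (fun x => x.isRight)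

/-- A family of subsets of `A ∪ B` is semiintersecting if every member meets each side in
exactly `k` elements, and any two distinct members are disjoint in exactly one of the sides. -/
def Semiintersecting (k N : ℕ) (F : Finset (Finset (Fin N ⊕ Fin N))) : Prop :=
  (∀ S ∈ F, (sideA S).card = k ∧ (sideB S).card = k) ∧
  (∀ S ∈ F, ∀ T ∈ F, S ≠ T →
      ((sideA S ∩ sideA T = ∅) ↔ (sideB S ∩ sideB T ≠ ∅)))

/-- `f k N`: the maximum cardinality of a semiintersecting family with parameters `k`, `N`. -/
noncomputable def semiMax (k N : ℕ) : ℕ :=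
  sSup {n | ∃ F : Finset (Finset (Fin N ⊕ Fin N)), Semiintersecting k N F ∧ F.card = n}
/-- `n` satisfies the Ramsey property for `(a,b)`: every graph on `n` vertices contains a
clique of size `a` or an independent set of size `b`. -/
def RamseyProp (a b n : ℕ) : Prop :=
  ∀ G : SimpleGraph (Fin n),
    (∃ s : Finset (Fin n), G.IsNClique a s) ∨
    (∃ s : Finset (Fin n), s.card = b ∧ ∀ x ∈ s, ∀ y ∈ s, x ≠ y → ¬ G.Adj x y)

/-- The Ramsey number `R(a,b)`. -/
noncomputable def ramseyNumber (a b : ℕ) : ℕ := sInf {n | RamseyProp a b n}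



/-- Pull back the Ramsey property along an injection. -/
lemma ramsey_pullback {a b n m : ℕ} (f : Fin n → Fin m) (hf : Function.Injective f)
    (G : SimpleGraph (Fin m)) (h : RamseyProp a b n) :
    (∃ s : Finset (Fin m), G.IsNClique a s ∧ ∀ x ∈ s, ∃ i, f i = x) ∨
    (∃ s : Finset (Fin m), s.card = b ∧ (∀ x ∈ s, ∀ y ∈ s, x ≠ y → ¬ G.Adj x y) ∧
      ∀ x ∈ s, ∃ i, f i = x) := by
  let G' : SimpleGraph (Fin n) :=
    { Adj := fun i j => G.Adj (f i) (f j)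
      symm := ⟨fun i j hij => G.symm.symm _ _ hij⟩
      loopless := ⟨fun i hii => G.loopless.irrefl _ hii⟩ }
  have hadj : ∀ i j, G'.Adj i j ↔ G.Adj (f i) (f j) := fun i j => Iff.rfl
  rcases h G' with ⟨s, hs⟩ | ⟨s, hsc, hsi⟩
  · left
    refine ⟨s.image f, ⟨?_, ?_⟩, ?_⟩
    · intro x hx y hy hxy
      simp only [Finset.coe_image, Set.mem_image, Finset.mem_coe] at hx hy
      obtain ⟨i, hi, rfl⟩ := hx
      obtain ⟨j, hj, rfl⟩ := hy
      have hij : i ≠ j := fun hh => hxy (by rw [hh])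
      exact (hadj i j).mp (hs.1 hi hj hij)
    · rw [Finset.card_image_of_injective _ hf, hs.2]
    · intro x hx
      obtain ⟨i, _, rfl⟩ := Finset.mem_image.mp hx
      exact ⟨i, rfl⟩
  · right
    refine ⟨s.image f, by rw [Finset.card_image_of_injective _ hf, hsc], ?_, ?_⟩
    · intro x hx y hy hxy hGadj
      obtain ⟨i, hi, rfl⟩ := Finset.mem_image.mp hx
      obtain ⟨j, hj, rfl⟩ := Finset.mem_image.mp hy
      have hij : i ≠ j := fun hh => hxy (by rw [hh])
      exact hsi i hi j hj hij ((hadj i j).mpr hGadj)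
    · intro x hx
      obtain ⟨i, _, rfl⟩ := Finset.mem_image.mp hx
      exact ⟨i, rfl⟩

lemma ramsey_mono {a b n m : ℕ} (h : RamseyProp a b n) (hnm : n ≤ m) :
    RamseyProp a b m := by
  intro G
  rcases ramsey_pullback (Fin.castLE hnm) (Fin.castLE_injective hnm) G h with
    ⟨s, hs, -⟩ | ⟨s, h1, h2, -⟩
  · exact Or.inl ⟨s, hs⟩
  · exact Or.inr ⟨s, h1, h2⟩

def rr : ℕ → ℕ → ℕ
  | 0, _ => 0
  | _+1, 0 => 0
  | a+1, b+1 => rr a (b+1) + rr (a+1) b + 1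

lemma ramsey_rr : ∀ a b : ℕ, RamseyProp a b (rr a b) := by
  intro a
  induction a with
  | zero =>
    intro b G
    exact Or.inl ⟨∅, by simp [SimpleGraph.isNClique_empty]⟩
  | succ a iha =>
    intro b
    induction b with
    | zero =>
      intro G
      exact Or.inr ⟨∅, by simp, by simp⟩
    | succ b ihb =>
      have hrr : rr (a+1) (b+1) = rr a (b+1) + rr (a+1) b + 1 := by simp [rr]
      rw [hrr]
      set n := rr a (b+1) + rr (a+1) b + 1 with hn
      intro G
      classical
      have hnpos : 0 < n := by omega
      set v : Fin n := ⟨0, hnpos⟩ with hv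
      set NB : Finset (Fin n) := univ.filter (fun x => G.Adj v x) with hNB
      set NC : Finset (Fin n) := univ.filter (fun x => x ≠ v ∧ ¬ G.Adj v x) with hNC
      have hcard : NB.card + NC.card + 1 = n := by
        have hdisj : Disjoint NB NC := by
          rw [Finset.disjoint_left]
          intro x hx hx'
          rw [hNB, Finset.mem_filter] at hx
          rw [hNC, Finset.mem_filter] at hx'
          exact hx'.2.2 hx.2
        have hun : NB ∪ NC = univ.filter (fun x => x ≠ v) := by
          ext x
          simp only [hNB, hNC, Finset.mem_union, Finset.mem_filter, Finset.mem_univ, true_and]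
          constructor
          · rintro (hadj | h)
            · exact fun hh => G.loopless.irrefl v (hh ▸ hadj)
            · exact h.1
          · intro hxv
            by_cases hadj : G.Adj v x
            · exact Or.inl hadj
            · exact Or.inr ⟨hxv, hadj⟩
        have := Finset.card_union_of_disjoint hdisj
        rw [hun] at this
        have h2 : (univ.filter (fun x : Fin n => x ≠ v)).card = n - 1 := by
          rw [Finset.filter_ne', Finset.card_erase_of_mem (Finset.mem_univ v), Finset.card_univ,
            Fintype.card_fin]
        omega
      have hkey : rr a (b+1) ≤ NB.card ∨ rr (a+1) b ≤ NC.card := by omega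
      rcases hkey with hbig | hbig
      · -- neighbor case
        obtain ⟨s', hs'sub, hs'card⟩ := Finset.exists_subset_card_eq hbig
        let f : Fin (rr a (b+1)) → Fin n := fun i => s'.orderEmbOfFin hs'card i
        have hfinj : Function.Injective f := fun i j hij => (s'.orderEmbOfFin hs'card).injective hij
        have hfmem : ∀ i, f i ∈ NB := fun i => hs'sub (Finset.orderEmbOfFin_mem s' hs'card i)
        have hfadj : ∀ i, G.Adj v (f i) := by
          intro i
          have := hfmem i
          rw [hNB, Finset.mem_filter] at this
          exact this.2
        rcases ramsey_pullback f hfinj G (iha (b+1)) with ⟨s, hs, hsr⟩ | ⟨s, h1, h2, -⟩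
        · left
          refine ⟨insert v s, ?_, ?_⟩
          · intro x hx y hy hxy
            simp only [Finset.coe_insert, Set.mem_insert_iff, Finset.mem_coe] at hx hy
            rcases hx with rfl | hx
            · rcases hy with rfl | hy
              · exact absurd rfl hxy
              · obtain ⟨i, rfl⟩ := hsr y hy
                exact hfadj i
            · rcases hy with rfl | hy
              · obtain ⟨i, rfl⟩ := hsr x hx
                exact (hfadj i).symm
              · exact hs.1 hx hy hxy
          · have hvns : v ∉ s := by
              intro hvs
              obtain ⟨i, hfi⟩ := hsr v hvs
              exact G.loopless.irrefl v (hfi ▸ hfadj i)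
            rw [Finset.card_insert_of_notMem hvns, hs.2]
        · exact Or.inr ⟨s, h1, h2⟩
      · -- non-neighbor case
        obtain ⟨s', hs'sub, hs'card⟩ := Finset.exists_subset_card_eq hbig
        let f : Fin (rr (a+1) b) → Fin n := fun i => s'.orderEmbOfFin hs'card i
        have hfinj : Function.Injective f := fun i j hij => (s'.orderEmbOfFin hs'card).injective hij
        have hfmem : ∀ i, f i ∈ NC := fun i => hs'sub (Finset.orderEmbOfFin_mem s' hs'card i)
        have hfadj : ∀ i, f i ≠ v ∧ ¬ G.Adj v (f i) := by
          intro i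
          have := hfmem i
          rw [hNC, Finset.mem_filter] at this
          exact this.2
        rcases ramsey_pullback f hfinj G ihb with ⟨s, hs, -⟩ | ⟨s, h1, h2, hsr⟩
        · exact Or.inl ⟨s, hs⟩
        · right
          refine ⟨insert v s, ?_, ?_⟩
          · have hvns : v ∉ s := by
              intro hvs
              obtain ⟨i, hfi⟩ := hsr v hvs
              exact (hfadj i).1 hfi
            rw [Finset.card_insert_of_notMem hvns, h1]
          · intro x hx y hy hxy hGadj
            rw [Finset.mem_insert] at hx hy
            rcases hx with rfl | hx
            · rcases hy with rfl | hy
              · exact hxy rfl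
              · obtain ⟨i, rfl⟩ := hsr y hy
                exact (hfadj i).2 hGadj
            · rcases hy with rfl | hy
              · obtain ⟨i, rfl⟩ := hsr x hx
                exact (hfadj i).2 hGadj.symm
              · exact h2 x hx y hy hxy hGadj

lemma ramsey_exists : ∃ n, RamseyProp 7 7 n := ⟨rr 7 7, ramsey_rr 7 7⟩

section CoreLemmas
variable {α : Type*} [DecidableEq α]


/-- A 2-element finset containing `x` is `{x,y}` for some `y ≠ x`. -/
lemma pair_other {s : Finset α} (hc : s.card = 2) {x : α} (hx : x ∈ s) :
    ∃ y, y ≠ x ∧ s = {x, y} := by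
  obtain ⟨a, b, hab, rfl⟩ := Finset.card_eq_two.mp hc
  rcases Finset.mem_insert.mp hx with rfl | hx'
  · exact ⟨b, fun h => hab h.symm, rfl⟩
  · rcases Finset.mem_singleton.mp hx' with rfl
    exact ⟨a, hab, by rw [Finset.pair_comm]⟩

/-- Counting: a family of pairwise-disjoint 2-element subsets of a universe of size `N`
has at most `N/2` members. -/
lemma count_half {N : ℕ} (F' : Finset (Finset α)) (w : Finset α → Finset α)
    (U : Finset α) (hU : U.card = N)
    (hsub : ∀ S ∈ F', w S ⊆ U) (hc : ∀ S ∈ F', (w S).card = 2)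
    (hdisj : ∀ S ∈ F', ∀ T ∈ F', S ≠ T → w S ∩ w T = ∅) :
    F'.card ≤ N / 2 := by
  have hb : (F'.biUnion w).card = ∑ S ∈ F', (w S).card := by
    apply Finset.card_biUnion
    intro S hS T hT hST
    rw [Function.onFun, Finset.disjoint_iff_inter_eq_empty]
    exact hdisj S hS T hT hST
  have hsum : ∑ S ∈ F', (w S).card = 2 * F'.card := by
    rw [Finset.sum_congr rfl hc, Finset.sum_const, smul_eq_mul, Nat.mul_comm]
  have hle : (F'.biUnion w).card ≤ N := by
    rw [← hU]
    apply Finset.card_le_card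
    intro x hx
    obtain ⟨S, hS, hxS⟩ := Finset.mem_biUnion.mp hx
    exact hsub S hS hxS
  rw [Nat.le_div_iff_mul_le (by norm_num : 0 < 2)]
  omega

/-- A family of ≥4 pairwise-intersecting 2-element sets has a common element. -/
lemma star_lemma (V : Finset (Finset α)) (hc : ∀ P ∈ V, P.card = 2)
    (hint : ∀ P ∈ V, ∀ Q ∈ V, P ≠ Q → (P ∩ Q).Nonempty) (h4 : 4 ≤ V.card) :
    ∃ a, ∀ P ∈ V, a ∈ P := by
  obtain ⟨P1, h1, P2, h2, h12⟩ := Finset.one_lt_card.mp (show 1 < V.card by omega)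
  obtain ⟨a, ha⟩ := hint P1 h1 P2 h2 h12
  rw [Finset.mem_inter] at ha
  obtain ⟨b, hba, hP1⟩ := pair_other (hc P1 h1) ha.1
  obtain ⟨c, hca, hP2⟩ := pair_other (hc P2 h2) ha.2
  have hbc : b ≠ c := by
    rintro rfl; exact h12 (hP1.trans hP2.symm)
  by_contra hno
  push_neg at hno
  obtain ⟨P0, h0, ha0⟩ := hno a
  -- P0 = {b, c}
  have hbc0 : ∀ P ∈ V, a ∉ P → P = {b, c} := by
    intro P hP haP
    have hne1 : P ≠ P1 := by rintro rfl; rw [hP1] at haP; simp at haP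
    have hne2 : P ≠ P2 := by rintro rfl; rw [hP2] at haP; simp at haP
    obtain ⟨x, hx⟩ := hint P hP P1 h1 hne1
    rw [Finset.mem_inter, hP1] at hx
    have hxb : x = b := by
      rcases Finset.mem_insert.mp hx.2 with rfl | hh
      · exact absurd hx.1 haP
      · exact Finset.mem_singleton.mp hh
    obtain ⟨y, hy⟩ := hint P hP P2 h2 hne2
    rw [Finset.mem_inter, hP2] at hy
    have hyc : y = c := by
      rcases Finset.mem_insert.mp hy.2 with rfl | hh
      · exact absurd hy.1 haP
      · exact Finset.mem_singleton.mp hh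
    rw [hxb] at hx
    rw [hyc] at hy
    have hsub : ({b, c} : Finset α) ⊆ P := by
      intro z hz
      rcases Finset.mem_insert.mp hz with rfl | hz'
      · exact hx.1
      · rw [Finset.mem_singleton.mp hz']; exact hy.1
    apply (Finset.eq_of_subset_of_card_le hsub _).symm
    rw [hc P hP, Finset.card_pair hbc]
  have hP0 : P0 = {b, c} := hbc0 P0 h0 ha0
  -- find a fourth set
  have hVsub : ¬ V ⊆ {P1, P2, P0} := by
    intro hsub
    have := Finset.card_le_card hsub
    have h3 : ({P1, P2, P0} : Finset (Finset α)).card ≤ 3 := by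
      have i1 := Finset.card_insert_le P1 ({P2, P0} : Finset (Finset α))
      have i2 := Finset.card_insert_le P2 ({P0} : Finset (Finset α))
      simp only [Finset.card_singleton] at *
      omega
    omega
  obtain ⟨Q, hQ, hQnot⟩ := Finset.not_subset.mp hVsub
  simp only [Finset.mem_insert, Finset.mem_singleton, not_or] at hQnot
  by_cases haQ : a ∈ Q
  · obtain ⟨d, hda, hQd⟩ := pair_other (hc Q hQ) haQ
    have hQP0 : Q ≠ P0 := hQnot.2.2
    obtain ⟨x, hx⟩ := hint Q hQ P0 h0 hQP0
    rw [Finset.mem_inter, hQd, hP0] at hx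
    rcases Finset.mem_insert.mp hx.1 with rfl | hh
    · -- x = a ∈ {b,c}, but a ∉ P0 = {b,c}
      rw [← hP0] at hx
      exact ha0 hx.2
    · rw [Finset.mem_singleton.mp hh] at hx
      rcases Finset.mem_insert.mp hx.2 with hdb | hdc
      · apply hQnot.1
        rw [hQd, hP1, hdb]
      · rw [Finset.mem_singleton.mp hdc] at hQd
        apply hQnot.2.1
        rw [hQd, hP2]
  · exact hQnot.2.2 ((hbc0 Q hQ haQ).trans hP0.symm)

/-- Two 2-element sets written as pairs with all cross elements distinct are disjoint. -/
lemma pair_disj {x s y t : α} (h1 : x ≠ y) (h2 : x ≠ t) (h3 : s ≠ y) (h4 : s ≠ t) :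
    ({x, s} : Finset α) ∩ {y, t} = ∅ := by
  ext z
  simp only [Finset.mem_inter, Finset.mem_insert, Finset.mem_singleton, Finset.notMem_empty,
    iff_false, not_and, not_or]
  rintro (rfl | rfl) <;> exact ⟨by assumption, by assumption⟩

lemma core_triple {N : ℕ} (F : Finset (Finset α)) (u v : Finset α → Finset α)
    (Uu : Finset α) (hUu : Uu.card = N)
    (hsubu : ∀ S ∈ F, u S ⊆ Uu)
    (hcard : ∀ S ∈ F, (u S).card = 2 ∧ (v S).card = 2)
    (hiff : ∀ S ∈ F, ∀ T ∈ F, S ≠ T → (u S ∩ u T = ∅ ↔ v S ∩ v T ≠ ∅))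
    (S1 S2 S3 : Finset α) (hS1 : S1 ∈ F) (hS2 : S2 ∈ F) (hS3 : S3 ∈ F)
    (h12 : S1 ≠ S2) (h13 : S1 ≠ S3) (h23 : S2 ≠ S3)
    (hv12 : v S1 = v S2) (hv13 : v S1 = v S3) :
    F.card ≤ N / 2 + 4 := by
  classical
  have huv : ∀ S ∈ F, ∀ T ∈ F, S ≠ T → (v S ∩ v T).Nonempty → u S ∩ u T = ∅ := by
    intro S hS T hT hST hvn
    exact (hiff S hS T hT hST).mpr (Finset.nonempty_iff_ne_empty.mp hvn)
  have hvu : ∀ S ∈ F, ∀ T ∈ F, S ≠ T → u S ∩ u T = ∅ → (v S ∩ v T).Nonempty := by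
    intro S hS T hT hST hu
    exact Finset.nonempty_iff_ne_empty.mpr ((hiff S hS T hT hST).mp hu)
  have hvu2 : ∀ S ∈ F, ∀ T ∈ F, S ≠ T → v S ∩ v T = ∅ → (u S ∩ u T).Nonempty := by
    intro S hS T hT hST hv
    by_contra hun
    rw [Finset.not_nonempty_iff_eq_empty] at hun
    have := hvu S hS T hT hST hun
    rw [hv] at this
    exact Finset.not_nonempty_empty this
  set Q := v S1 with hQ
  have hQcard : Q.card = 2 := (hcard S1 hS1).2
  have hQne : Q.Nonempty := Finset.card_pos.mp (by omega)
  set H := F.filter (fun S => v S = Q) with hH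
  have hS1H : S1 ∈ H := Finset.mem_filter.mpr ⟨hS1, rfl⟩
  have hS2H : S2 ∈ H := Finset.mem_filter.mpr ⟨hS2, hv12.symm⟩
  have hS3H : S3 ∈ H := Finset.mem_filter.mpr ⟨hS3, hv13.symm⟩
  have hHF : H ⊆ F := Finset.filter_subset _ _
  have hHvQ : ∀ S ∈ H, v S = Q := fun S hS => (Finset.mem_filter.mp hS).2
  have hHdisj : ∀ S ∈ H, ∀ T ∈ H, S ≠ T → u S ∩ u T = ∅ := by
    intro S hS T hT hST
    apply huv S (hHF hS) T (hHF hT) hST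
    rw [hHvQ S hS, hHvQ T hT, Finset.inter_self]
    exact hQne
  have hH3 : 3 ≤ H.card := by
    have htriple : ({S1, S2, S3} : Finset (Finset α)).card = 3 := by
      rw [Finset.card_insert_of_notMem (by simp [h12, h13]),
        Finset.card_insert_of_notMem (by simp [h23]), Finset.card_singleton]
    rw [← htriple]
    apply Finset.card_le_card
    intro x hx
    rcases Finset.mem_insert.mp hx with rfl | hx'
    · exact hS1H
    rcases Finset.mem_insert.mp hx' with rfl | hx''
    · exact hS2H
    · rw [Finset.mem_singleton.mp hx'']; exact hS3H
  -- every set outside H meets Q on the v-side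
  have step2 : ∀ S ∈ F, S ∉ H → (v S ∩ Q).Nonempty := by
    intro S hS hSH
    by_contra hvSQ
    rw [Finset.not_nonempty_iff_eq_empty] at hvSQ
    have hwit : ∀ T, T ∈ H → (u S ∩ u T).Nonempty := by
      intro T hTH
      have hST : S ≠ T := fun h => hSH (h ▸ hTH)
      by_contra hun
      rw [Finset.not_nonempty_iff_eq_empty] at hun
      have := hvu S hS T (hHF hTH) hST hun
      rw [hHvQ T hTH, hvSQ] at this
      exact Finset.not_nonempty_empty this
    obtain ⟨x1, hx1⟩ := hwit S1 hS1H
    obtain ⟨x2, hx2⟩ := hwit S2 hS2H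
    obtain ⟨x3, hx3⟩ := hwit S3 hS3H
    rw [Finset.mem_inter] at hx1 hx2 hx3
    have hd12 : x1 ≠ x2 := by
      rintro rfl
      have := hHdisj S1 hS1H S2 hS2H h12
      have hm : x1 ∈ u S1 ∩ u S2 := Finset.mem_inter.mpr ⟨hx1.2, hx2.2⟩
      rw [this] at hm; exact Finset.notMem_empty _ hm
    have hd13 : x1 ≠ x3 := by
      rintro rfl
      have := hHdisj S1 hS1H S3 hS3H h13
      have hm : x1 ∈ u S1 ∩ u S3 := Finset.mem_inter.mpr ⟨hx1.2, hx3.2⟩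
      rw [this] at hm; exact Finset.notMem_empty _ hm
    have hd23 : x2 ≠ x3 := by
      rintro rfl
      have := hHdisj S2 hS2H S3 hS3H h23
      have hm : x2 ∈ u S2 ∩ u S3 := Finset.mem_inter.mpr ⟨hx2.2, hx3.2⟩
      rw [this] at hm; exact Finset.notMem_empty _ hm
    have hsub3 : ({x1, x2, x3} : Finset α) ⊆ u S := by
      intro z hz
      rcases Finset.mem_insert.mp hz with rfl | hz'
      · exact hx1.1
      rcases Finset.mem_insert.mp hz' with rfl | hz''
      · exact hx2.1
      · rw [Finset.mem_singleton.mp hz'']; exact hx3.1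
    have hc3 : ({x1, x2, x3} : Finset α).card = 3 := by
      rw [Finset.card_insert_of_notMem (by simp [hd12, hd13]),
        Finset.card_insert_of_notMem (by simp [hd23]), Finset.card_singleton]
    have := Finset.card_le_card hsub3
    rw [hc3, (hcard S hS).1] at this
    omega
  have step3 : ∀ S ∈ F, S ∉ H → ∀ T ∈ H, u S ∩ u T = ∅ := by
    intro S hS hSH T hTH
    have hST : S ≠ T := fun h => hSH (h ▸ hTH)
    apply huv S hS T (hHF hTH) hST
    rw [hHvQ T hTH]
    exact step2 S hS hSH
  obtain ⟨q1, q2, hq12, hQeq⟩ := Finset.card_eq_two.mp hQcard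
  set K := F.filter (fun S => ¬ v S = Q) with hK
  set K1 := K.filter (fun S => q1 ∈ v S) with hK1
  set K2 := K.filter (fun S => ¬ q1 ∈ v S) with hK2
  have hKF : K ⊆ F := Finset.filter_subset _ _
  have hK1F : K1 ⊆ F := (Finset.filter_subset _ _).trans hKF
  have hK2F : K2 ⊆ F := (Finset.filter_subset _ _).trans hKF
  have hKnotH : ∀ S ∈ K, S ∉ H := by
    intro S hS hSH
    exact (Finset.mem_filter.mp hS).2 (hHvQ S hSH)
  have hHK : H.card + K.card = F.card := Finset.card_filter_add_card_filter_not _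
  have hK12 : K1.card + K2.card = K.card := Finset.card_filter_add_card_filter_not _
  -- structure of v-sides in K1 and K2
  have hK1mem : ∀ S ∈ K1, ∃ s, s ≠ q1 ∧ s ≠ q2 ∧ v S = {q1, s} := by
    intro S hS
    have hSK : S ∈ K := Finset.mem_filter.mp hS |>.1
    have hq1S : q1 ∈ v S := (Finset.mem_filter.mp hS).2
    obtain ⟨s, hs1, hs2⟩ := pair_other (hcard S (hK1F hS)).2 hq1S
    refine ⟨s, hs1, ?_, hs2⟩
    rintro rfl
    apply (Finset.mem_filter.mp hSK).2
    rw [hs2, hQeq]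
  have hK2mem : ∀ S ∈ K2, ∃ t, t ≠ q1 ∧ t ≠ q2 ∧ v S = {q2, t} := by
    intro S hS
    have hSK : S ∈ K := Finset.mem_filter.mp hS |>.1
    have hq1S : q1 ∉ v S := (Finset.mem_filter.mp hS).2
    have hq2S : q2 ∈ v S := by
      obtain ⟨x, hx⟩ := step2 S (hKF hSK) (hKnotH S hSK)
      rw [Finset.mem_inter, hQeq] at hx
      rcases Finset.mem_insert.mp hx.2 with rfl | hh
      · exact absurd hx.1 hq1S
      · rw [← Finset.mem_singleton.mp hh]; exact hx.1
    obtain ⟨t, ht1, ht2⟩ := pair_other (hcard S (hK2F hS)).2 hq2S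
    refine ⟨t, ?_, ht1, ht2⟩
    rintro rfl
    rw [ht2] at hq1S
    simp at hq1S
  have hK1disj : ∀ S ∈ K1, ∀ T ∈ K1, S ≠ T → u S ∩ u T = ∅ := by
    intro S hS T hT hST
    apply huv S (hK1F hS) T (hK1F hT) hST
    exact ⟨q1, Finset.mem_inter.mpr ⟨(Finset.mem_filter.mp hS).2, (Finset.mem_filter.mp hT).2⟩⟩
  have hK2disj : ∀ S ∈ K2, ∀ T ∈ K2, S ≠ T → u S ∩ u T = ∅ := by
    intro S hS T hT hST
    apply huv S (hK2F hS) T (hK2F hT) hST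
    obtain ⟨s, -, -, hvS⟩ := hK2mem S hS
    obtain ⟨t, -, -, hvT⟩ := hK2mem T hT
    exact ⟨q2, Finset.mem_inter.mpr ⟨by rw [hvS]; simp, by rw [hvT]; simp⟩⟩
  -- H together with either K1 or K2 is pairwise u-disjoint, hence small
  have hbound : ∀ K' : Finset (Finset α), K' ⊆ F → (∀ S ∈ K', S ∉ H) →
      (∀ S ∈ K', ∀ T ∈ K', S ≠ T → u S ∩ u T = ∅) → H.card + K'.card ≤ N / 2 := by
    intro K' hK'F hK'H hK'disj
    have hdisjHK : Disjoint H K' := by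
      rw [Finset.disjoint_left]
      intro x hx hx'
      exact hK'H x hx' hx
    have := count_half (N := N) (H ∪ K') u Uu hUu ?_ ?_ ?_
    · rwa [Finset.card_union_of_disjoint hdisjHK] at this
    · intro S hS
      rcases Finset.mem_union.mp hS with hS' | hS'
      · exact hsubu S (hHF hS')
      · exact hsubu S (hK'F hS')
    · intro S hS
      rcases Finset.mem_union.mp hS with hS' | hS'
      · exact (hcard S (hHF hS')).1
      · exact (hcard S (hK'F hS')).1
    · intro S hS T hT hST
      rcases Finset.mem_union.mp hS with hS' | hS' <;>
        rcases Finset.mem_union.mp hT with hT' | hT'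
      · exact hHdisj S hS' T hT' hST
      · rw [Finset.inter_comm]; exact step3 T (hK'F hT') (hK'H T hT') S hS'
      · exact step3 S (hK'F hS') (hK'H S hS') T hT'
      · exact hK'disj S hS' T hT' hST
  have hboundK1 : H.card + K1.card ≤ N / 2 :=
    hbound K1 hK1F (fun S hS => hKnotH S (Finset.mem_filter.mp hS).1) hK1disj
  have hboundK2 : H.card + K2.card ≤ N / 2 :=
    hbound K2 hK2F (fun S hS => hKnotH S (Finset.mem_filter.mp hS).1) hK2disj
  by_cases hk1 : K1.card ≤ 4
  · omega
  by_cases hk2 : K2.card ≤ 4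
  · omega
  push_neg at hk1 hk2
  -- the key filter-cardinality claims
  have claim7 : ∀ T ∈ K2, (K1.filter (fun S => v S ∩ v T = ∅)).card ≤ 2 := by
    intro T hT
    by_contra hgt
    push_neg at hgt
    set W := K1.filter (fun S => v S ∩ v T = ∅) with hW
    have hWK1 : W ⊆ K1 := Finset.filter_subset _ _
    have hui : ∀ S ∈ W, (u S ∩ u T).Nonempty := by
      intro S hS
      have hSK1 : S ∈ K1 := hWK1 hS
      have hST : S ≠ T := by
        rintro rfl
        exact (Finset.mem_filter.mp hT).2 (Finset.mem_filter.mp hSK1).2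
      exact hvu2 S (hK1F hSK1) T (hK2F hT) hST (Finset.mem_filter.mp hS).2
    have hmap : ∀ S ∈ W, (if h : (u S ∩ u T).Nonempty then h.choose else q1) ∈ u T := by
      intro S hS
      rw [dif_pos (hui S hS)]
      exact (Finset.mem_inter.mp (hui S hS).choose_spec).2
    have hlt : (u T).card < W.card := by rw [(hcard T (hK2F hT)).1]; omega
    obtain ⟨S, hS, S', hS', hSS', heq⟩ :=
      Finset.exists_ne_map_eq_of_card_lt_of_maps_to hlt hmap
    rw [dif_pos (hui S hS), dif_pos (hui S' hS')] at heq
    have hx : (hui S hS).choose ∈ u S ∩ u S' := by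
      refine Finset.mem_inter.mpr ⟨(Finset.mem_inter.mp (hui S hS).choose_spec).1, ?_⟩
      rw [heq]
      exact (Finset.mem_inter.mp (hui S' hS').choose_spec).1
    rw [hK1disj S (hWK1 hS) S' (hWK1 hS') hSS'] at hx
    exact Finset.notMem_empty _ hx
  have claim8 : ∀ S ∈ K1, (K2.filter (fun T => v S ∩ v T = ∅)).card ≤ 2 := by
    intro S hS
    by_contra hgt
    push_neg at hgt
    set W := K2.filter (fun T => v S ∩ v T = ∅) with hW
    have hWK2 : W ⊆ K2 := Finset.filter_subset _ _
    have hui : ∀ T ∈ W, (u S ∩ u T).Nonempty := by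
      intro T hT
      have hTK2 : T ∈ K2 := hWK2 hT
      have hST : S ≠ T := by
        rintro rfl
        exact (Finset.mem_filter.mp hTK2).2 (Finset.mem_filter.mp hS).2
      exact hvu2 S (hK1F hS) T (hK2F hTK2) hST (Finset.mem_filter.mp hT).2
    have hmap : ∀ T ∈ W, (if h : (u S ∩ u T).Nonempty then h.choose else q1) ∈ u S := by
      intro T hT
      rw [dif_pos (hui T hT)]
      exact (Finset.mem_inter.mp (hui T hT).choose_spec).1
    have hlt : (u S).card < W.card := by rw [(hcard S (hK1F hS)).1]; omega
    obtain ⟨T, hT, T', hT', hTT', heq⟩ :=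
      Finset.exists_ne_map_eq_of_card_lt_of_maps_to hlt hmap
    rw [dif_pos (hui T hT), dif_pos (hui T' hT')] at heq
    have hx : (hui T hT).choose ∈ u T ∩ u T' := by
      refine Finset.mem_inter.mpr ⟨(Finset.mem_inter.mp (hui T hT).choose_spec).2, ?_⟩
      rw [heq]
      exact (Finset.mem_inter.mp (hui T' hT').choose_spec).2
    rw [hK2disj T (hWK2 hT) T' (hWK2 hT') hTT'] at hx
    exact Finset.notMem_empty _ hx
  obtain ⟨T0, hT0⟩ := Finset.card_pos.mp (show 0 < K2.card by omega)
  obtain ⟨t0, ht0q1, ht0q2, hvT0⟩ := hK2mem T0 hT0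
  have claim9 : ∀ T ∈ K2, v T = {q2, t0} := by
    intro T hT
    obtain ⟨t, htq1, htq2, hvT⟩ := hK2mem T hT
    have htt0 : t = t0 := by
      by_contra htt0
      have hsub : K1 ⊆ (K1.filter (fun S => v S ∩ v T = ∅)) ∪
          (K1.filter (fun S => v S ∩ v T0 = ∅)) := by
        intro S hS
        obtain ⟨s, hsq1, hsq2, hvS⟩ := hK1mem S hS
        by_cases hst : s = t
        · refine Finset.mem_union_right _ (Finset.mem_filter.mpr ⟨hS, ?_⟩)
          rw [hvS, hvT0]
          exact pair_disj hq12 (Ne.symm ht0q1) hsq2 (by rw [hst]; exact htt0)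
        · refine Finset.mem_union_left _ (Finset.mem_filter.mpr ⟨hS, ?_⟩)
          rw [hvS, hvT]
          exact pair_disj hq12 (Ne.symm htq1) hsq2 hst
      have hle := Finset.card_le_card hsub
      have hun := Finset.card_union_le (K1.filter (fun S => v S ∩ v T = ∅))
        (K1.filter (fun S => v S ∩ v T0 = ∅))
      have c1 := claim7 T hT
      have c2 := claim7 T0 hT0
      omega
    rw [hvT, htt0]
  obtain ⟨S0, hS0⟩ := Finset.card_pos.mp (show 0 < K1.card by omega)
  obtain ⟨s0, hs0q1, hs0q2, hvS0⟩ := hK1mem S0 hS0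
  have claim10 : ∀ S ∈ K1, v S = {q1, s0} := by
    intro S hS
    obtain ⟨s, hsq1, hsq2, hvS⟩ := hK1mem S hS
    have hss0 : s = s0 := by
      by_contra hss0
      have hsub : K2 ⊆ (K2.filter (fun T => v S ∩ v T = ∅)) ∪
          (K2.filter (fun T => v S0 ∩ v T = ∅)) := by
        intro T hT
        obtain ⟨t, htq1, htq2, hvT⟩ := hK2mem T hT
        by_cases hst : t = s
        · refine Finset.mem_union_right _ (Finset.mem_filter.mpr ⟨hT, ?_⟩)
          rw [hvS0, hvT]
          exact pair_disj hq12 (Ne.symm htq1) hs0q2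
            (by rw [hst]; exact fun hh => hss0 hh.symm)
        · refine Finset.mem_union_left _ (Finset.mem_filter.mpr ⟨hT, ?_⟩)
          rw [hvS, hvT]
          exact pair_disj hq12 (Ne.symm htq1) hsq2 (fun hh => hst hh.symm)
      have hle := Finset.card_le_card hsub
      have hun := Finset.card_union_le (K2.filter (fun T => v S ∩ v T = ∅))
        (K2.filter (fun T => v S0 ∩ v T = ∅))
      have c1 := claim8 S hS
      have c2 := claim8 S0 hS0
      omega
    rw [hvS, hss0]
  have hs0t0 : s0 = t0 := by
    by_contra hst
    have hsub : K2 ⊆ K2.filter (fun T => v S0 ∩ v T = ∅) := by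
      intro T hT
      refine Finset.mem_filter.mpr ⟨hT, ?_⟩
      rw [hvS0, claim9 T hT]
      exact pair_disj hq12 (Ne.symm ht0q1) hs0q2 hst
    have hle := Finset.card_le_card hsub
    have c := claim8 S0 hS0
    omega
  have hsplit : ∀ S ∈ F, S ∈ H ∨ S ∈ K1 ∨ S ∈ K2 := by
    intro S hS
    by_cases h1 : v S = Q
    · exact Or.inl (Finset.mem_filter.mpr ⟨hS, h1⟩)
    · have hSK : S ∈ K := Finset.mem_filter.mpr ⟨hS, h1⟩
      by_cases h2 : q1 ∈ v S
      · exact Or.inr (Or.inl (Finset.mem_filter.mpr ⟨hSK, h2⟩))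
      · exact Or.inr (Or.inr (Finset.mem_filter.mpr ⟨hSK, h2⟩))
  have hcross : ∀ S ∈ K1, ∀ T ∈ K2, u S ∩ u T = ∅ := by
    intro S hS T hT
    have hST : S ≠ T := by
      rintro rfl
      exact (Finset.mem_filter.mp hT).2 (Finset.mem_filter.mp hS).2
    apply huv S (hK1F hS) T (hK2F hT) hST
    refine ⟨t0, ?_⟩
    rw [Finset.mem_inter, claim10 S hS, claim9 T hT, hs0t0]
    simp
  have hnotH : ∀ S, S ∈ K1 ∨ S ∈ K2 → S ∉ H := by
    rintro S (hS | hS)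
    · exact hKnotH S (Finset.mem_filter.mp hS).1
    · exact hKnotH S (Finset.mem_filter.mp hS).1
  have hall : ∀ S ∈ F, ∀ T ∈ F, S ≠ T → u S ∩ u T = ∅ := by
    intro S hS T hT hST
    rcases hsplit S hS with hSH | hSK | hSK <;> rcases hsplit T hT with hTH | hTK | hTK
    · exact hHdisj S hSH T hTH hST
    · rw [Finset.inter_comm]
      exact step3 T (hK1F hTK) (hnotH T (Or.inl hTK)) S hSH
    · rw [Finset.inter_comm]
      exact step3 T (hK2F hTK) (hnotH T (Or.inr hTK)) S hSH
    · exact step3 S (hK1F hSK) (hnotH S (Or.inl hSK)) T hTH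
    · exact hK1disj S hSK T hTK hST
    · exact hcross S hSK T hTK
    · exact step3 S (hK2F hSK) (hnotH S (Or.inr hSK)) T hTH
    · rw [Finset.inter_comm]
      exact hcross T hTK S hSK
    · exact hK2disj S hSK T hTK hST
  have := count_half (N := N) F u Uu hUu hsubu (fun S hS => (hcard S hS).1) hall
  omega

lemma core_seven {N : ℕ} (F : Finset (Finset α)) (u v : Finset α → Finset α)
    (Uu Uv : Finset α) (hUu : Uu.card = N) (hUv : Uv.card = N)
    (hsubu : ∀ S ∈ F, u S ⊆ Uu) (hsubv : ∀ S ∈ F, v S ⊆ Uv)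
    (hcard : ∀ S ∈ F, (u S).card = 2 ∧ (v S).card = 2)
    (hiff : ∀ S ∈ F, ∀ T ∈ F, S ≠ T → (u S ∩ u T = ∅ ↔ v S ∩ v T ≠ ∅))
    (T7 : Finset (Finset α)) (hsub7 : T7 ⊆ F) (hc7 : T7.card = 7)
    (hint7 : ∀ S ∈ T7, ∀ T ∈ T7, S ≠ T → (u S ∩ u T).Nonempty) :
    F.card ≤ N / 2 + 4 := by
  classical
  have hiff_swap : ∀ S ∈ F, ∀ T ∈ F, S ≠ T → (v S ∩ v T = ∅ ↔ u S ∩ u T ≠ ∅) := by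
    intro S hS T hT hST
    have h := hiff S hS T hT hST
    tauto
  by_cases hA : ∃ P, 3 ≤ (T7.filter (fun S => u S = P)).card
  · obtain ⟨P, hP⟩ := hA
    obtain ⟨t3, ht3sub, ht3card⟩ := Finset.exists_subset_card_eq hP
    obtain ⟨S1, S2, S3, h12, h13, h23, ht3⟩ := Finset.card_eq_three.mp ht3card
    have hmem : ∀ S ∈ t3, S ∈ F ∧ u S = P := by
      intro S hS
      have := ht3sub hS
      rw [Finset.mem_filter] at this
      exact ⟨hsub7 this.1, this.2⟩
    have hm1 : S1 ∈ t3 := by rw [ht3]; simp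
    have hm2 : S2 ∈ t3 := by rw [ht3]; simp
    have hm3 : S3 ∈ t3 := by rw [ht3]; simp
    exact core_triple F v u Uv hUv hsubv
      (fun S hS => ⟨(hcard S hS).2, (hcard S hS).1⟩) hiff_swap
      S1 S2 S3 (hmem S1 hm1).1 (hmem S2 hm2).1 (hmem S3 hm3).1 h12 h13 h23
      ((hmem S1 hm1).2.trans (hmem S2 hm2).2.symm)
      ((hmem S1 hm1).2.trans (hmem S3 hm3).2.symm)
  · push_neg at hA
    have hfib : ∀ P, (T7.filter (fun S => u S = P)).card ≤ 2 := by
      intro P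
      have := hA P
      omega
    have hvd : ∀ S ∈ T7, ∀ T ∈ T7, S ≠ T → v S ∩ v T = ∅ := by
      intro S hS T hT hST
      by_contra hne
      have h0 := (hiff S (hsub7 hS) T (hsub7 hT) hST).mpr hne
      have := hint7 S hS T hT hST
      rw [h0] at this
      exact Finset.not_nonempty_empty this
    set V := T7.image u with hV
    have hVcard : 4 ≤ V.card := by
      have hfw : T7.card = ∑ P ∈ V, (T7.filter (fun S => u S = P)).card :=
        Finset.card_eq_sum_card_fiberwise (fun S hS => Finset.mem_image_of_mem u hS)
      have hsum : ∑ P ∈ V, (T7.filter (fun S => u S = P)).card ≤ ∑ _P ∈ V, 2 :=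
        Finset.sum_le_sum (fun P _ => hfib P)
      rw [Finset.sum_const, smul_eq_mul] at hsum
      omega
    have hstar := star_lemma V ?_ ?_ hVcard
    rotate_left
    · intro P hP
      obtain ⟨S, hS, rfl⟩ := Finset.mem_image.mp hP
      exact (hcard S (hsub7 hS)).1
    · intro P hP Q hQ hPQ
      obtain ⟨S, hS, rfl⟩ := Finset.mem_image.mp hP
      obtain ⟨T, hT, rfl⟩ := Finset.mem_image.mp hQ
      exact hint7 S hS T hT (fun h => hPQ (by rw [h]))
    obtain ⟨a, ha⟩ := hstar
    have haT7 : ∀ S ∈ T7, a ∈ u S := fun S hS => ha (u S) (Finset.mem_image_of_mem u hS)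
    have haF : ∀ S ∈ F, a ∈ u S := by
      intro S hS
      by_cases hST7 : S ∈ T7
      · exact haT7 S hST7
      by_contra haS
      set W := T7.filter (fun T => u S ∩ u T = ∅) with hW
      have hWcard : W.card ≤ 2 := by
        by_contra hgt
        push_neg at hgt
        have hWT7 : W ⊆ T7 := Finset.filter_subset _ _
        have hvi : ∀ T ∈ W, (v S ∩ v T).Nonempty := by
          intro T hT
          have hTT7 : T ∈ W := hT
          have hST : S ≠ T := fun h => hST7 (h ▸ hWT7 hT)
          exact Finset.nonempty_iff_ne_empty.mpr
            ((hiff S hS T (hsub7 (hWT7 hT)) hST).mp (Finset.mem_filter.mp hT).2)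
        have hmap : ∀ T ∈ W, (if h : (v S ∩ v T).Nonempty then h.choose else a) ∈ v S := by
          intro T hT
          rw [dif_pos (hvi T hT)]
          exact (Finset.mem_inter.mp (hvi T hT).choose_spec).1
        have hlt : (v S).card < W.card := by rw [(hcard S hS).2]; omega
        obtain ⟨T, hT, T', hT', hTT', heq⟩ :=
          Finset.exists_ne_map_eq_of_card_lt_of_maps_to hlt hmap
        rw [dif_pos (hvi T hT), dif_pos (hvi T' hT')] at heq
        have hx : (hvi T hT).choose ∈ v T ∩ v T' := by
          refine Finset.mem_inter.mpr ⟨(Finset.mem_inter.mp (hvi T hT).choose_spec).2, ?_⟩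
          rw [heq]
          exact (Finset.mem_inter.mp (hvi T' hT').choose_spec).2
        rw [hvd T (hWT7 hT) T' (hWT7 hT') hTT'] at hx
        exact Finset.notMem_empty _ hx
      have hWc : 5 ≤ (T7.filter (fun T => ¬ u S ∩ u T = ∅)).card := by
        have h7 : W.card + (T7.filter (fun T => ¬ u S ∩ u T = ∅)).card = T7.card :=
          Finset.card_filter_add_card_filter_not (fun T => u S ∩ u T = ∅)
        omega
      have hsubB : T7.filter (fun T => ¬ u S ∩ u T = ∅) ⊆
          (u S).biUnion (fun w => T7.filter (fun T => u T = {a, w})) := by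
        intro T hT
        have hTT7 : T ∈ T7 := (Finset.mem_filter.mp hT).1
        have hne : (u S ∩ u T).Nonempty :=
          Finset.nonempty_iff_ne_empty.mpr (Finset.mem_filter.mp hT).2
        obtain ⟨w, hw⟩ := hne
        rw [Finset.mem_inter] at hw
        have hwa : a ≠ w := fun h => haS (h ▸ hw.1)
        have hsub2 : ({a, w} : Finset α) ⊆ u T := by
          intro z hz
          rcases Finset.mem_insert.mp hz with rfl | hz'
          · exact haT7 T hTT7
          · rw [Finset.mem_singleton.mp hz']; exact hw.2
        have hle2 : (u T).card ≤ ({a, w} : Finset α).card := by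
          rw [(hcard T (hsub7 hTT7)).1, Finset.card_pair hwa]
        have huT : u T = {a, w} := (Finset.eq_of_subset_of_card_le hsub2 hle2).symm
        exact Finset.mem_biUnion.mpr ⟨w, hw.1, Finset.mem_filter.mpr ⟨hTT7, huT⟩⟩
      have hble := Finset.card_le_card hsubB
      have hbun := Finset.card_biUnion_le
        (s := u S) (t := fun w => T7.filter (fun T => u T = {a, w}))
      have hsum2 : ∑ w ∈ u S, (T7.filter (fun T => u T = {a, w})).card ≤ ∑ _w ∈ u S, 2 :=
        Finset.sum_le_sum (fun w _ => hfib _)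
      rw [Finset.sum_const, smul_eq_mul, (hcard S hS).1] at hsum2
      omega
    have hallv : ∀ S ∈ F, ∀ T ∈ F, S ≠ T → v S ∩ v T = ∅ := by
      intro S hS T hT hST
      by_contra hne
      have h0 := (hiff S hS T hT hST).mpr hne
      have : a ∈ u S ∩ u T := Finset.mem_inter.mpr ⟨haF S hS, haF T hT⟩
      rw [h0] at this
      exact Finset.notMem_empty _ this
    have := count_half (N := N) F v Uv hUv hsubv (fun S hS => (hcard S hS).2) hallv
    omega

end CoreLemmas

lemma cardUL (N : ℕ) : ((univ : Finset (Fin N ⊕ Fin N)).filter (fun x => x.isLeft)).card = N := by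
  have h : (univ : Finset (Fin N ⊕ Fin N)).filter (fun x => x.isLeft) =
      (univ : Finset (Fin N)).image Sum.inl := by
    ext x
    cases x <;> simp
  rw [h, Finset.card_image_of_injective _ Sum.inl_injective, Finset.card_univ, Fintype.card_fin]

lemma cardUR (N : ℕ) : ((univ : Finset (Fin N ⊕ Fin N)).filter (fun x => x.isRight)).card = N := by
  have h : (univ : Finset (Fin N ⊕ Fin N)).filter (fun x => x.isRight) =
      (univ : Finset (Fin N)).image Sum.inr := by
    ext x
    cases x <;> simp
  rw [h, Finset.card_image_of_injective _ Sum.inr_injective, Finset.card_univ, Fintype.card_fin]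

lemma sideA_subset {N : ℕ} (S : Finset (Fin N ⊕ Fin N)) :
    sideA S ⊆ (univ : Finset (Fin N ⊕ Fin N)).filter (fun x => x.isLeft) := by
  intro x hx
  exact Finset.mem_filter.mpr ⟨Finset.mem_univ x, (Finset.mem_filter.mp hx).2⟩

lemma sideB_subset {N : ℕ} (S : Finset (Fin N ⊕ Fin N)) :
    sideB S ⊆ (univ : Finset (Fin N ⊕ Fin N)).filter (fun x => x.isRight) := by
  intro x hx
  exact Finset.mem_filter.mpr ⟨Finset.mem_univ x, (Finset.mem_filter.mp hx).2⟩

lemma main_bound {N : ℕ} (F : Finset (Finset (Fin N ⊕ Fin N)))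
    (hF : Semiintersecting 2 N F) (hram : ramseyNumber 7 7 ≤ N / 2) :
    F.card ≤ N / 2 + 4 := by
  classical
  by_cases hsmall : F.card ≤ N / 2 + 4
  · exact hsmall
  push_neg at hsmall
  have hRam : RamseyProp 7 7 F.card :=
    ramsey_mono (Nat.sInf_mem ramsey_exists) (show ramseyNumber 7 7 ≤ F.card by omega)
  set e : Fin F.card ≃ {x // x ∈ F} := F.equivFin.symm with he
  have hinj : Function.Injective (fun i : Fin F.card => (e i : Finset (Fin N ⊕ Fin N))) :=
    fun i j hij => e.injective (Subtype.coe_injective hij)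
  set G : SimpleGraph (Fin F.card) :=
    { Adj := fun i j => i ≠ j ∧ (sideA (e i : Finset (Fin N ⊕ Fin N)) ∩
        sideA (e j : Finset (Fin N ⊕ Fin N))).Nonempty
      symm := by
        refine ⟨?_⟩; rintro i j ⟨hij, hne⟩
        exact ⟨hij.symm, by rwa [Finset.inter_comm]⟩
      loopless := by refine ⟨?_⟩; rintro i ⟨hii, -⟩; exact hii rfl } with hG
  have hadj : ∀ i j, G.Adj i j ↔ (i ≠ j ∧ (sideA (e i : Finset (Fin N ⊕ Fin N)) ∩
      sideA (e j : Finset (Fin N ⊕ Fin N))).Nonempty) := fun i j => Iff.rfl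
  have himg : ∀ s : Finset (Fin F.card),
      (s.image (fun i => (e i : Finset (Fin N ⊕ Fin N)))).card = s.card :=
    fun s => Finset.card_image_of_injective s hinj
  have himgF : ∀ s : Finset (Fin F.card),
      (s.image (fun i => (e i : Finset (Fin N ⊕ Fin N)))) ⊆ F := by
    intro s X hX
    obtain ⟨i, -, rfl⟩ := Finset.mem_image.mp hX
    exact (e i).2
  rcases hRam G with ⟨s, hs⟩ | ⟨s, hsc, hsi⟩
  · -- 7 pairwise A-intersecting sets
    set T7 := s.image (fun i => (e i : Finset (Fin N ⊕ Fin N))) with hT7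
    have hint7 : ∀ X ∈ T7, ∀ Y ∈ T7, X ≠ Y → (sideA X ∩ sideA Y).Nonempty := by
      intro X hX Y hY hXY
      obtain ⟨i, hi, rfl⟩ := Finset.mem_image.mp hX
      obtain ⟨j, hj, rfl⟩ := Finset.mem_image.mp hY
      have hij : i ≠ j := fun h => hXY (by rw [h])
      exact (hs.1 (Finset.mem_coe.mpr hi) (Finset.mem_coe.mpr hj) hij).2
    have := core_seven (N := N) F sideA sideB _ _ (cardUL N) (cardUR N)
      (fun S _ => sideA_subset S) (fun S _ => sideB_subset S) hF.1 hF.2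
      T7 (himgF s) (by rw [hT7, himg, hs.2]) hint7
    omega
  · -- 7 pairwise B-intersecting sets
    set T7 := s.image (fun i => (e i : Finset (Fin N ⊕ Fin N))) with hT7
    have hint7 : ∀ X ∈ T7, ∀ Y ∈ T7, X ≠ Y → (sideB X ∩ sideB Y).Nonempty := by
      intro X hX Y hY hXY
      obtain ⟨i, hi, rfl⟩ := Finset.mem_image.mp hX
      obtain ⟨j, hj, rfl⟩ := Finset.mem_image.mp hY
      have hij : i ≠ j := fun h => hXY (by rw [h])
      have hnadj := hsi i hi j hj hij
      rw [hadj] at hnadj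
      push_neg at hnadj
      have hAempty : sideA (e i : Finset (Fin N ⊕ Fin N)) ∩
          sideA (e j : Finset (Fin N ⊕ Fin N)) = ∅ :=
        hnadj hij
      have hXY' : (e i : Finset (Fin N ⊕ Fin N)) ≠ (e j : Finset (Fin N ⊕ Fin N)) := hXY
      exact Finset.nonempty_iff_ne_empty.mpr
        ((hF.2 _ (e i).2 _ (e j).2 hXY').mp hAempty)
    have hiff_swap : ∀ S ∈ F, ∀ T ∈ F, S ≠ T →
        (sideB S ∩ sideB T = ∅ ↔ sideA S ∩ sideA T ≠ ∅) := by
      intro S hS T hT hST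
      have := hF.2 S hS T hT hST
      tauto
    have := core_seven (N := N) F sideB sideA _ _ (cardUR N) (cardUL N)
      (fun S _ => sideB_subset S) (fun S _ => sideA_subset S)
      (fun S hS => ⟨(hF.1 S hS).2, (hF.1 S hS).1⟩) hiff_swap
      T7 (himgF s) (by rw [hT7, himg, hsc]) hint7
    omega


theorem semiMax_two (N : ℕ) (h : ramseyNumber 7 7 ≤ N / 2) :
    semiMax 2 N ≤ N / 2 + 4 := by
  have hne : {n | ∃ F : Finset (Finset (Fin N ⊕ Fin N)),
      Semiintersecting 2 N F ∧ F.card = n}.Nonempty := by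
    refine ⟨0, ∅, ⟨?_, ?_⟩, rfl⟩ <;> intro S hS <;> simp at hS
  have hbdd : BddAbove {n | ∃ F : Finset (Finset (Fin N ⊕ Fin N)),
      Semiintersecting 2 N F ∧ F.card = n} := by
    refine ⟨N / 2 + 4, ?_⟩
    rintro n ⟨F, hF, rfl⟩
    exact main_bound F hF h
  obtain ⟨F, hF, hc⟩ := Nat.sSup_mem hne hbdd
  rw [semiMax, ← hc]
  exact main_bound F hF h
end

section
/- For every positive integer k there is a constant c depending only on k such that f(k,N) ≤ ⌊N/k⌋ + c for all N. -/
open Finset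

namespace SemiAux

/-- Sunflower (Δ-system) with core `Y`. -/
def IsSunflower {β : Type*} [DecidableEq β] (D : Finset (Finset β)) (Y : Finset β) : Prop :=
  ∀ S ∈ D, ∀ T ∈ D, S ≠ T → S ∩ T = Y

open scoped Classical

/-- Erdős–Rado sunflower lemma. -/
theorem sunflower_lemma {β : Type*} [DecidableEq β] :
    ∀ (w : ℕ) (p : ℕ) (A : Finset (Finset β)), (∀ S ∈ A, S.card = w) →
      Nat.factorial w * p ^ w < A.card →
      ∃ D Y, D ⊆ A ∧ D.card = p + 1 ∧ IsSunflower D Y := by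
  intro w
  induction w with
  | zero =>
    intro p A hcards hbig
    exfalso
    have hsub : A ⊆ {∅} := by
      intro S hS
      simp only [mem_singleton]
      exact card_eq_zero.mp (hcards S hS)
    have := card_le_card hsub
    simp at this hbig
    omega
  | succ w ih =>
    intro p A hcards hbig
    -- take a maximum-cardinality pairwise disjoint subfamily P
    set cand := A.powerset.filter (fun P => ∀ S ∈ P, ∀ T ∈ P, S ≠ T → Disjoint S T) with hcand
    have hne : cand.Nonempty := ⟨∅, by simp [hcand]⟩
    obtain ⟨P, hPmem, hPmax⟩ := Finset.exists_max_image cand Finset.card hne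
    simp only [hcand, mem_filter, mem_powerset] at hPmem
    obtain ⟨hPA, hPdisj⟩ := hPmem
    by_cases hbigP : p + 1 ≤ P.card
    · obtain ⟨D, hDP, hDcard⟩ := Finset.exists_subset_card_eq hbigP
      refine ⟨D, ∅, hDP.trans hPA, hDcard, ?_⟩
      intro S hS T hT hne
      exact disjoint_iff_inter_eq_empty.mp (hPdisj S (hDP hS) T (hDP hT) hne)
    · push_neg at hbigP
      have hPcard : P.card ≤ p := Nat.lt_succ_iff.mp hbigP
      set U := P.biUnion id with hU
      have hUcard : U.card ≤ p * (w + 1) := by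
        calc U.card ≤ ∑ T ∈ P, T.card := card_biUnion_le
          _ = ∑ T ∈ P, (w+1) := by
              apply Finset.sum_congr rfl; intro T hT; exact hcards T (hPA hT)
          _ = P.card * (w+1) := by rw [Finset.sum_const, smul_eq_mul]
          _ ≤ p * (w+1) := by exact Nat.mul_le_mul_right _ hPcard
      -- every member of A meets U
      have hmeet : ∀ S ∈ A, (S ∩ U).Nonempty := by
        intro S hS
        by_cases hSP : S ∈ P
        · have h1 : S.Nonempty := by
            rw [← card_pos, hcards S hS]; omega
          obtain ⟨x, hx⟩ := h1
          exact ⟨x, mem_inter.mpr ⟨hx, mem_biUnion.mpr ⟨S, hSP, hx⟩⟩⟩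
        · by_contra hcon
          -- then insert S P is a bigger pairwise disjoint family
          have hins : insert S P ∈ cand := by
            simp only [hcand, mem_filter, mem_powerset]
            constructor
            · exact insert_subset hS hPA
            · intro S' hS' T' hT' hne'
              rw [mem_insert] at hS' hT'
              rcases hS' with rfl | hS'
              · rcases hT' with rfl | hT'
                · exact absurd rfl hne'
                · rw [disjoint_iff_inter_eq_empty]
                  rw [Finset.not_nonempty_iff_eq_empty] at hcon
                  by_contra hcc
                  obtain ⟨x, hx⟩ := Finset.nonempty_iff_ne_empty.mpr hcc
                  rw [mem_inter] at hx
                  have : x ∈ S' ∩ U := mem_inter.mpr ⟨hx.1, mem_biUnion.mpr ⟨T', hT', hx.2⟩⟩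
                  rw [hcon] at this; exact absurd this (notMem_empty x)
              · rcases hT' with rfl | hT'
                · rw [disjoint_comm, disjoint_iff_inter_eq_empty]
                  rw [Finset.not_nonempty_iff_eq_empty] at hcon
                  by_contra hcc
                  obtain ⟨x, hx⟩ := Finset.nonempty_iff_ne_empty.mpr hcc
                  rw [mem_inter] at hx
                  have : x ∈ T' ∩ U := mem_inter.mpr ⟨hx.1, mem_biUnion.mpr ⟨S', hS', hx.2⟩⟩
                  rw [hcon] at this; exact absurd this (notMem_empty x)
                · exact hPdisj S' hS' T' hT' hne'
          have := hPmax _ hins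
          rw [card_insert_of_notMem hSP] at this
          omega
      -- pigeonhole over U
      have hdouble : A.card ≤ ∑ x ∈ U, (A.filter (fun S => x ∈ S)).card := by
        calc A.card = ∑ S ∈ A, 1 := by simp
          _ ≤ ∑ S ∈ A, (S ∩ U).card := by
              apply Finset.sum_le_sum
              intro S hS
              exact Nat.one_le_iff_ne_zero.mpr (by
                rw [← Nat.pos_iff_ne_zero, card_pos]; exact hmeet S hS)
          _ = ∑ S ∈ A, (U.filter (fun x => x ∈ S)).card := by
              apply Finset.sum_congr rfl; intro S hS
              congr 1
              ext x; simp [mem_inter, mem_filter, and_comm]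
          _ = ∑ S ∈ A, ∑ x ∈ U, (if x ∈ S then 1 else 0) := by
              apply Finset.sum_congr rfl; intro S hS
              rw [Finset.card_filter]
          _ = ∑ x ∈ U, ∑ S ∈ A, (if x ∈ S then 1 else 0) := Finset.sum_comm
          _ = ∑ x ∈ U, (A.filter (fun S => x ∈ S)).card := by
              apply Finset.sum_congr rfl; intro x hx
              rw [Finset.card_filter]
      have hex : ∃ x ∈ U, Nat.factorial w * p ^ w < (A.filter (fun S => x ∈ S)).card := by
        by_contra hcon
        push_neg at hcon
        have : ∑ x ∈ U, (A.filter (fun S => x ∈ S)).card ≤ U.card * (Nat.factorial w * p ^ w) := by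
          calc ∑ x ∈ U, (A.filter (fun S => x ∈ S)).card
              ≤ ∑ _x ∈ U, (Nat.factorial w * p ^ w) := Finset.sum_le_sum hcon
            _ = U.card * (Nat.factorial w * p ^ w) := by rw [Finset.sum_const, smul_eq_mul]
        have hle : A.card ≤ p * (w+1) * (Nat.factorial w * p ^ w) :=
          le_trans hdouble (le_trans this (Nat.mul_le_mul_right _ hUcard))
        have : p * (w+1) * (Nat.factorial w * p ^ w) = Nat.factorial (w+1) * p ^ (w+1) := by
          rw [Nat.factorial_succ, pow_succ]; ring
        rw [this] at hle
        omega
      obtain ⟨x, hxU, hxbig⟩ := hex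
      -- apply IH to the erased family
      set Ax := A.filter (fun S => x ∈ S) with hAx
      set B := Ax.image (fun S => S.erase x) with hB
      have hinj : Set.InjOn (fun S : Finset β => S.erase x) Ax := by
        intro S hS T hT h
        simp only [hAx, mem_coe, mem_filter] at hS hT
        have h2 : insert x (S.erase x) = insert x (T.erase x) := congrArg (insert x) h
        rwa [Finset.insert_erase hS.2, Finset.insert_erase hT.2] at h2
      have hBcard : B.card = Ax.card := Finset.card_image_of_injOn hinj
      have hBcards : ∀ S ∈ B, S.card = w := by
        intro S hS
        simp only [hB, mem_image] at hS
        obtain ⟨T, hT, rfl⟩ := hS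
        rw [mem_filter] at hT
        rw [Finset.card_erase_of_mem hT.2, hcards T hT.1]
        omega
      have hBbig : Nat.factorial w * p ^ w < B.card := by rw [hBcard]; exact hxbig
      obtain ⟨D', Y', hD'B, hD'card, hD'sun⟩ := ih p B hBcards hBbig
      -- lift back
      refine ⟨D'.image (fun S => insert x S), insert x Y', ?_, ?_, ?_⟩
      · intro S hS
        simp only [mem_image] at hS
        obtain ⟨T, hT, rfl⟩ := hS
        have hTB := hD'B hT
        simp only [hB, mem_image] at hTB
        obtain ⟨V, hV, rfl⟩ := hTB
        rw [mem_filter] at hV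
        rw [Finset.insert_erase hV.2]
        exact hV.1
      · rw [Finset.card_image_of_injOn, hD'card]
        intro S hS T hT h
        have hxS : x ∉ S := by
          have := hD'B hS
          simp only [hB, mem_image, mem_coe] at this
          obtain ⟨V, hV, rfl⟩ := this
          exact Finset.notMem_erase x V
        have hxT : x ∉ T := by
          have := hD'B hT
          simp only [hB, mem_image, mem_coe] at this
          obtain ⟨V, hV, rfl⟩ := this
          exact Finset.notMem_erase x V
        simp only at h
        have : (insert x S).erase x = (insert x T).erase x := by rw [h]
        rwa [Finset.erase_insert hxS, Finset.erase_insert hxT] at this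
      · intro S hS T hT hne
        simp only [mem_image] at hS hT
        obtain ⟨S', hS', rfl⟩ := hS
        obtain ⟨T', hT', rfl⟩ := hT
        have hne' : S' ≠ T' := by rintro rfl; exact hne rfl
        rw [show insert x S' ∩ insert x T' = insert x (S' ∩ T') from ?_, hD'sun S' hS' T' hT' hne']
        ext y
        simp only [mem_inter, mem_insert]
        tauto

/-- pigeonhole helper: if each member of `D` has a witness in a small set `W`,
two members share a witness. -/
lemma common_witness {γ δ : Type*} [DecidableEq γ] (D : Finset δ) (g : δ → Finset γ)
    (W : Finset γ) (hW : W.card < D.card) (hne : ∀ T ∈ D, (W ∩ g T).Nonempty) :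
    ∃ T ∈ D, ∃ T' ∈ D, T ≠ T' ∧ ∃ x, x ∈ g T ∧ x ∈ g T' ∧ x ∈ W := by
  have hDne : D.Nonempty := Finset.card_pos.mp (by omega)
  obtain ⟨T₀, hT₀⟩ := hDne
  obtain ⟨x₀, _⟩ := hne T₀ hT₀
  obtain ⟨f, hfspec⟩ : ∃ f : δ → γ, ∀ T ∈ D, f T ∈ W ∧ f T ∈ g T := by
    refine ⟨fun T => if h : (W ∩ g T).Nonempty then h.choose else x₀, ?_⟩
    intro T hT
    have h := hne T hT
    simp only [h, dif_pos]
    exact ⟨(Finset.mem_inter.mp h.choose_spec).1, (Finset.mem_inter.mp h.choose_spec).2⟩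
  obtain ⟨T, hT, T', hT', hne', heq⟩ :=
    Finset.exists_ne_map_eq_of_card_lt_of_maps_to hW (fun T hT => (hfspec T hT).1)
  refine ⟨T, hT, T', hT', hne', f T', ?_, (hfspec T' hT').2, (hfspec T' hT').1⟩
  rw [← heq]
  exact (hfspec T hT).2

end SemiAux
section Basic

open SemiAux
open scoped Classical

variable {N k : ℕ}

lemma mem_sideA {S : Finset (Fin N ⊕ Fin N)} {x} :
    x ∈ sideA S ↔ x ∈ S ∧ x.isLeft := by
  simp [sideA]

lemma mem_sideB {S : Finset (Fin N ⊕ Fin N)} {x} :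
    x ∈ sideB S ↔ x ∈ S ∧ x.isRight := by
  simp [sideB]

lemma sideA_inter (S T : Finset (Fin N ⊕ Fin N)) :
    sideA (S ∩ T) = sideA S ∩ sideA T := by
  ext x; simp only [mem_sideA, mem_inter]; tauto

lemma sideB_inter (S T : Finset (Fin N ⊕ Fin N)) :
    sideB (S ∩ T) = sideB S ∩ sideB T := by
  ext x; simp only [mem_sideB, mem_inter]; tauto

lemma sideA_subset_of_subset {S T : Finset (Fin N ⊕ Fin N)} (h : S ⊆ T) :
    sideA S ⊆ sideA T := by
  intro x hx; rw [mem_sideA] at hx ⊢; exact ⟨h hx.1, hx.2⟩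

lemma sideB_subset_of_subset {S T : Finset (Fin N ⊕ Fin N)} (h : S ⊆ T) :
    sideB S ⊆ sideB T := by
  intro x hx; rw [mem_sideB] at hx ⊢; exact ⟨h hx.1, hx.2⟩

/-- cardinality of each member of a semiintersecting family -/
lemma card_of_mem {F : Finset (Finset (Fin N ⊕ Fin N))} (hF : Semiintersecting k N F)
    {S : Finset (Fin N ⊕ Fin N)} (hS : S ∈ F) : S.card = 2 * k := by
  have h1 := (hF.1 S hS).1
  have h2 := (hF.1 S hS).2
  have hsplit : (sideA S).card + (sideB S).card = S.card := by
    rw [sideA, sideB]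
    rw [show S.filter (fun x => x.isRight) = S.filter (fun x => ¬ (x.isLeft : Prop)) from ?_]
    · exact Finset.card_filter_add_card_filter_not _
    · apply Finset.filter_congr
      intro x _
      cases x <;> simp
  omega

/-- a pairwise `sideA`-disjoint family has at most `N / k` members. -/
lemma card_le_of_pairwise_disjointA {F : Finset (Finset (Fin N ⊕ Fin N))}
    (hk : 0 < k) (hF : Semiintersecting k N F)
    {P : Finset (Finset (Fin N ⊕ Fin N))} (hPF : P ⊆ F)
    (hdisj : ∀ S ∈ P, ∀ T ∈ P, S ≠ T → sideA S ∩ sideA T = ∅) :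
    P.card ≤ N / k := by
  rw [Nat.le_div_iff_mul_le hk]
  have hcard : (P.biUnion sideA).card = ∑ S ∈ P, (sideA S).card := by
    apply Finset.card_biUnion
    intro S hS T hT hne
    rw [Function.onFun, Finset.disjoint_iff_inter_eq_empty]
    exact hdisj S hS T hT hne
  have hsum : ∑ S ∈ P, (sideA S).card = P.card * k := by
    rw [Finset.sum_congr rfl (fun S hS => (hF.1 S (hPF hS)).1), Finset.sum_const, smul_eq_mul]
  have hsub : P.biUnion sideA ⊆ (Finset.univ : Finset (Fin N ⊕ Fin N)).filter (fun x => x.isLeft) := by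
    intro x hx
    rw [Finset.mem_biUnion] at hx
    obtain ⟨S, _, hxS⟩ := hx
    rw [mem_sideA] at hxS
    simp [hxS.2]
  have huniv : ((Finset.univ : Finset (Fin N ⊕ Fin N)).filter (fun x => x.isLeft)).card = N := by
    rw [show (Finset.univ : Finset (Fin N ⊕ Fin N)).filter (fun x => x.isLeft)
        = (Finset.univ : Finset (Fin N)).map ⟨Sum.inl, Sum.inl_injective⟩ from ?_]
    · simp
    · ext x
      cases x <;> simp
  calc P.card * k = (P.biUnion sideA).card := by rw [hcard, hsum]
    _ ≤ N := le_trans (Finset.card_le_card hsub) (le_of_eq huniv)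

/-- any ≥2-element sunflower inside a semiintersecting family has a core which is
empty on exactly one side -/
lemma sunflower_core_classify {F D : Finset (Finset (Fin N ⊕ Fin N))} {Y : Finset (Fin N ⊕ Fin N)}
    (hF : Semiintersecting k N F) (hDF : D ⊆ F) (hD2 : 2 ≤ D.card) (hsun : IsSunflower D Y) :
    (sideA Y = ∅ ↔ sideB Y ≠ ∅) := by
  obtain ⟨S, hS, T, hT, hne⟩ := Finset.one_lt_card.mp hD2
  have hiff := hF.2 S (hDF hS) T (hDF hT) hne
  have hY := hsun S hS T hT hne
  rw [← sideA_inter, ← sideB_inter, hY] at hiff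
  exact hiff

/-- key lemma (O1): if `D ⊆ F` is a sunflower with `2k+1` members whose core `Y` has empty
`A`-side, then every member of `F` meets `Y` on the `B`-side. -/
lemma meets_core {F D : Finset (Finset (Fin N ⊕ Fin N))} {Y : Finset (Fin N ⊕ Fin N)}
    (hk : 0 < k) (hF : Semiintersecting k N F) (hDF : D ⊆ F) (hDcard : D.card = 2 * k + 1)
    (hsun : IsSunflower D Y) (hYA : sideA Y = ∅) :
    ∀ S ∈ F, (sideB S ∩ sideB Y).Nonempty := by
  have hD2 : 2 ≤ D.card := by omega
  have hYB : sideB Y ≠ ∅ := (sunflower_core_classify hF hDF hD2 hsun).mp hYA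
  have hYsub : ∀ T ∈ D, Y ⊆ T := by
    intro T hT
    obtain ⟨S₁, hS₁, S₂, hS₂, hne₁₂⟩ := Finset.one_lt_card.mp hD2
    rcases eq_or_ne T S₁ with rfl | hTS₁
    · rw [← hsun T hT S₂ hS₂ hne₁₂]; exact Finset.inter_subset_left
    · rw [← hsun S₁ hS₁ T hT (Ne.symm hTS₁)]; exact Finset.inter_subset_right
  intro S hS
  by_cases hSD : S ∈ D
  · obtain ⟨y, hy⟩ := Finset.nonempty_iff_ne_empty.mpr hYB
    exact ⟨y, Finset.mem_inter.mpr ⟨sideB_subset_of_subset (hYsub S hSD) hy, hy⟩⟩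
  · by_contra hcon
    rw [Finset.not_nonempty_iff_eq_empty] at hcon
    -- split D into members meeting S on side A resp. side B
    set D1 := D.filter (fun T => (sideA S ∩ sideA T).Nonempty) with hD1
    set D2 := D.filter (fun T => (sideB S ∩ sideB T).Nonempty) with hD2'
    have hcover : D ⊆ D1 ∪ D2 := by
      intro T hT
      have hne : S ≠ T := fun h => hSD (h ▸ hT)
      have hiff := hF.2 S hS T (hDF hT) hne
      rw [Finset.mem_union, hD1, hD2', Finset.mem_filter, Finset.mem_filter]
      by_cases hA : (sideA S ∩ sideA T).Nonempty
      · exact Or.inl ⟨hT, hA⟩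
      · rw [Finset.not_nonempty_iff_eq_empty] at hA
        have := hiff.mp hA
        exact Or.inr ⟨hT, Finset.nonempty_iff_ne_empty.mpr this⟩
    -- D1 has at most k elements
    have hD1card : D1.card ≤ k := by
      by_contra hbig
      push_neg at hbig
      have hcards : (sideA S).card < D1.card := by
        rw [(hF.1 S hS).1]; omega
      obtain ⟨T, hT, T', hT', hne', x, hx1, hx2, _⟩ :=
        common_witness D1 sideA (sideA S) hcards (fun T hT => by
          obtain ⟨y, hy⟩ := (Finset.mem_filter.mp hT).2
          exact ⟨y, hy⟩)
      have : x ∈ sideA T ∩ sideA T' := Finset.mem_inter.mpr ⟨hx1, hx2⟩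
      rw [← sideA_inter, hsun T (Finset.mem_filter.mp hT).1 T' (Finset.mem_filter.mp hT').1 hne',
        hYA] at this
      exact absurd this (Finset.notMem_empty _)
    -- D2 has at most k elements
    have hD2card : D2.card ≤ k := by
      by_contra hbig
      push_neg at hbig
      have hcards : (sideB S).card < D2.card := by
        rw [(hF.1 S hS).2]; omega
      obtain ⟨T, hT, T', hT', hne', x, hx1, hx2, hxW⟩ :=
        common_witness D2 sideB (sideB S) hcards (fun T hT => by
          obtain ⟨y, hy⟩ := (Finset.mem_filter.mp hT).2
          exact ⟨y, hy⟩)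
      have hmem : x ∈ sideB T ∩ sideB T' := Finset.mem_inter.mpr ⟨hx1, hx2⟩
      rw [← sideB_inter, hsun T (Finset.mem_filter.mp hT).1 T' (Finset.mem_filter.mp hT').1 hne']
        at hmem
      have : x ∈ sideB S ∩ sideB Y := Finset.mem_inter.mpr ⟨hxW, hmem⟩
      rw [hcon] at this
      exact absurd this (Finset.notMem_empty _)
    have := Finset.card_le_card hcover
    have := Finset.card_union_le D1 D2
    omega

/-- O2 : two sunflowers of opposite type cannot coexist. -/
lemma no_opposite_sunflowers {F Da Db : Finset (Finset (Fin N ⊕ Fin N))}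
    {X Y : Finset (Fin N ⊕ Fin N)}
    (hk : 0 < k) (hF : Semiintersecting k N F)
    (hDaF : Da ⊆ F) (hDacard : Da.card = 2 * k + 1) (hsuna : IsSunflower Da X)
    (hXB : sideB X = ∅)
    (hDbF : Db ⊆ F) (hDbcard : Db.card = 2 * k + 1) (hsunb : IsSunflower Db Y)
    (hYA : sideA Y = ∅) : False := by
  have hmeet := meets_core hk hF hDbF hDbcard hsunb hYA
  -- Y ⊆ some member of Db, so sideB Y has ≤ k elements
  have hDb2 : 2 ≤ Db.card := by omega
  obtain ⟨T₁, hT₁, T₂, hT₂, hne₁₂⟩ := Finset.one_lt_card.mp hDb2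
  have hYsub : Y ⊆ T₁ := by
    rw [← hsunb T₁ hT₁ T₂ hT₂ hne₁₂]; exact Finset.inter_subset_left
  have hYcard : (sideB Y).card ≤ k := by
    calc (sideB Y).card ≤ (sideB T₁).card :=
          Finset.card_le_card (sideB_subset_of_subset hYsub)
      _ = k := (hF.1 T₁ (hDbF hT₁)).2
  have hcards : (sideB Y).card < Da.card := by omega
  obtain ⟨T, hT, T', hT', hne', x, hx1, hx2, _⟩ :=
    common_witness Da sideB (sideB Y) hcards (fun T hT => by
      obtain ⟨y, hy⟩ := hmeet T (hDaF hT)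
      rw [Finset.mem_inter] at hy
      exact ⟨y, Finset.mem_inter.mpr ⟨hy.2, hy.1⟩⟩)
  have : x ∈ sideB T ∩ sideB T' := Finset.mem_inter.mpr ⟨hx1, hx2⟩
  rw [← sideB_inter, hsuna T hT T' hT' hne', hXB] at this
  exact absurd this (Finset.notMem_empty _)

end Basic
section Main

open SemiAux
open scoped Classical

variable {N k : ℕ}

/-- the sunflower threshold for `2k`-sets and `2k+1` petals -/
def SFb (k : ℕ) : ℕ := Nat.factorial (2*k) * (2*k)^(2*k)

/-- Main bound in the case where `F` has no "A-type" sunflower. -/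
lemma case1 {F : Finset (Finset (Fin N ⊕ Fin N))} (hk : 0 < k)
    (hF : Semiintersecting k N F)
    (hNoA : ¬ ∃ D Y, D ⊆ F ∧ D.card = 2*k+1 ∧ IsSunflower D Y ∧ sideB Y = ∅) :
    F.card ≤ N / k + SFb k * (1 + k * SFb k) := by
  -- a pairwise `A`-intersecting subfamily has at most `SFb k` members
  have hclique : ∀ C ⊆ F, (∀ S ∈ C, ∀ T ∈ C, S ≠ T → (sideA S ∩ sideA T).Nonempty) →
      C.card ≤ SFb k := by
    intro C hCF hmeet
    by_contra hbig
    push_neg at hbig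
    obtain ⟨D, Y, hDC, hDcard, hsun⟩ :=
      sunflower_lemma (2*k) (2*k) C (fun S hS => card_of_mem hF (hCF hS)) hbig
    have hD2 : 2 ≤ D.card := by omega
    obtain ⟨S, hS, T, hT, hne⟩ := Finset.one_lt_card.mp hD2
    have hAY : (sideA Y).Nonempty := by
      rw [← hsun S hS T hT hne, sideA_inter]
      exact hmeet S (hDC hS) T (hDC hT) hne
    have hiff := sunflower_core_classify hF (hDC.trans hCF) hD2 hsun
    have hBY : sideB Y = ∅ := by
      by_contra hBY
      have h0 := hiff.mpr hBY
      rw [h0] at hAY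
      exact absurd hAY (by simp)
    exact hNoA ⟨D, Y, hDC.trans hCF, hDcard, hsun, hBY⟩
  -- the `A`-degree of each member is at most `k * SFb k`
  set nbrs : Finset (Fin N ⊕ Fin N) → Finset (Finset (Fin N ⊕ Fin N)) :=
    fun S => F.filter (fun T => T ≠ S ∧ (sideA S ∩ sideA T).Nonempty) with hnbrs
  have hdeg : ∀ S ∈ F, (nbrs S).card ≤ k * SFb k := by
    intro S hS
    rcases Finset.eq_empty_or_nonempty (nbrs S) with hemp | ⟨T₀, hT₀⟩
    · rw [hemp]; simp
    · have hw := (Finset.mem_filter.mp hT₀).2.2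
      obtain ⟨x₀, _⟩ := hw
      obtain ⟨f, hfspec⟩ : ∃ f : Finset (Fin N ⊕ Fin N) → (Fin N ⊕ Fin N),
          ∀ T ∈ nbrs S, f T ∈ sideA S ∧ f T ∈ sideA T := by
        refine ⟨fun T => if h : (sideA S ∩ sideA T).Nonempty then h.choose else x₀, ?_⟩
        intro T hT
        have h := (Finset.mem_filter.mp hT).2.2
        simp only [h, dif_pos]
        exact ⟨(Finset.mem_inter.mp h.choose_spec).1, (Finset.mem_inter.mp h.choose_spec).2⟩
      have hfib := Finset.card_eq_sum_card_fiberwise (fun T hT => (hfspec T hT).1)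
        (t := sideA S) (s := nbrs S)
      rw [hfib]
      have hbound : ∀ x ∈ sideA S, ((nbrs S).filter (fun T => f T = x)).card ≤ SFb k := by
        intro x hx
        apply hclique
        · intro T hT
          exact (Finset.mem_filter.mp (Finset.mem_filter.mp hT).1).1
        · intro T hT T' hT' hne
          rw [Finset.mem_filter] at hT hT'
          have h1 : x ∈ sideA T := hT.2 ▸ (hfspec T hT.1).2
          have h2 : x ∈ sideA T' := hT'.2 ▸ (hfspec T' hT'.1).2
          exact ⟨x, Finset.mem_inter.mpr ⟨h1, h2⟩⟩
      calc ∑ x ∈ sideA S, ((nbrs S).filter (fun T => f T = x)).card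
          ≤ ∑ _x ∈ sideA S, SFb k := Finset.sum_le_sum hbound
        _ = k * SFb k := by rw [Finset.sum_const, smul_eq_mul, (hF.1 S hS).1]
  -- W : members meeting some other member on side A
  set W := F.filter (fun S => ∃ T ∈ F, T ≠ S ∧ (sideA S ∩ sideA T).Nonempty) with hW
  -- P : maximum pairwise A-disjoint subfamily of W
  set cand := W.powerset.filter
    (fun P => ∀ S ∈ P, ∀ T ∈ P, S ≠ T → sideA S ∩ sideA T = ∅) with hcand
  have hcne : cand.Nonempty := ⟨∅, by simp [hcand]⟩
  obtain ⟨P, hPmem, hPmax⟩ := Finset.exists_max_image cand Finset.card hcne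
  simp only [hcand, Finset.mem_filter, Finset.mem_powerset] at hPmem
  obtain ⟨hPW, hPdisj⟩ := hPmem
  have hPF : P ⊆ F := hPW.trans (Finset.filter_subset _ _)
  -- P is small
  have hPcard : P.card ≤ SFb k := by
    by_contra hbig
    push_neg at hbig
    obtain ⟨D, Y, hDP, hDcard, hsun⟩ :=
      sunflower_lemma (2*k) (2*k) P (fun S hS => card_of_mem hF (hPF hS)) hbig
    have hD2 : 2 ≤ D.card := by omega
    obtain ⟨S, hS, T, hT, hne⟩ := Finset.one_lt_card.mp hD2
    have hYA : sideA Y = ∅ := by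
      rw [← hsun S hS T hT hne, sideA_inter]
      exact hPdisj S (hDP hS) T (hDP hT) hne
    have hmeet := meets_core hk hF (hDP.trans hPF) hDcard hsun hYA
    -- pick T₀ ∈ D, it lies in W so has an A-neighbour T₁
    have hDne : D.Nonempty := Finset.card_pos.mp (by omega)
    obtain ⟨T₀, hT₀⟩ := hDne
    have hT₀W : T₀ ∈ W := hPW (hDP hT₀)
    rw [hW, Finset.mem_filter] at hT₀W
    have hT₀F : T₀ ∈ F := hT₀W.1
    obtain ⟨T₁, hT₁F, hT₁ne, hT₁meet⟩ := hT₀W.2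
    have hiff := hF.2 T₀ hT₀F T₁ hT₁F (Ne.symm hT₁ne)
    have hBdisj : sideB T₀ ∩ sideB T₁ = ∅ := by
      by_contra hBne
      have h0 := hiff.mpr hBne
      rw [h0] at hT₁meet
      exact absurd hT₁meet (by simp)
    obtain ⟨x, hx⟩ := hmeet T₁ hT₁F
    rw [Finset.mem_inter] at hx
    have hYsubT₀ : Y ⊆ T₀ := by
      rcases eq_or_ne T₀ S with rfl | hTS
      · rw [← hsun T₀ hT₀ T hT hne]; exact Finset.inter_subset_left
      · rw [← hsun S hS T₀ hT₀ (Ne.symm hTS)]; exact Finset.inter_subset_right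
    have : x ∈ sideB T₀ ∩ sideB T₁ :=
      Finset.mem_inter.mpr ⟨sideB_subset_of_subset hYsubT₀ hx.2, hx.1⟩
    rw [hBdisj] at this
    exact absurd this (Finset.notMem_empty _)
  -- W is covered by P and the neighbourhoods of P
  have hWsub : W ⊆ P ∪ P.biUnion nbrs := by
    intro S hSW
    by_cases hSP : S ∈ P
    · exact Finset.mem_union_left _ hSP
    · have hSF : S ∈ F := (Finset.filter_subset _ _) hSW
      have : ∃ T ∈ P, (sideA S ∩ sideA T).Nonempty := by
        by_contra hcon
        push_neg at hcon
        have hins : insert S P ∈ cand := by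
          simp only [hcand, Finset.mem_filter, Finset.mem_powerset]
          refine ⟨Finset.insert_subset hSW hPW, ?_⟩
          intro S' hS' T' hT' hne'
          rw [Finset.mem_insert] at hS' hT'
          rcases hS' with rfl | hS'
          · rcases hT' with rfl | hT'
            · exact absurd rfl hne'
            · rw [← Finset.not_nonempty_iff_eq_empty]
              exact Finset.not_nonempty_iff_eq_empty.mpr (hcon T' hT')
          · rcases hT' with rfl | hT'
            · rw [Finset.inter_comm, ← Finset.not_nonempty_iff_eq_empty]
              exact Finset.not_nonempty_iff_eq_empty.mpr (hcon S' hS')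
            · exact hPdisj S' hS' T' hT' hne'
        have := hPmax _ hins
        rw [Finset.card_insert_of_notMem hSP] at this
        omega
      obtain ⟨T, hTP, hmeet2⟩ := this
      apply Finset.mem_union_right
      rw [Finset.mem_biUnion]
      refine ⟨T, hTP, ?_⟩
      rw [hnbrs, Finset.mem_filter]
      have hne3 : S ≠ T := fun h => hSP (h ▸ hTP)
      exact ⟨hSF, hne3, by rwa [Finset.inter_comm]⟩
  have hWcard : W.card ≤ SFb k * (1 + k * SFb k) := by
    calc W.card ≤ (P ∪ P.biUnion nbrs).card := Finset.card_le_card hWsub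
      _ ≤ P.card + (P.biUnion nbrs).card := Finset.card_union_le _ _
      _ ≤ P.card + ∑ T ∈ P, (nbrs T).card := by
          have := Finset.card_biUnion_le (s := P) (t := nbrs)
          omega
      _ ≤ SFb k + ∑ T ∈ P, (k * SFb k) := by
          have h1 := Finset.sum_le_sum (fun T hT => hdeg T (hPF hT))
          omega
      _ = SFb k + P.card * (k * SFb k) := by rw [Finset.sum_const, smul_eq_mul]
      _ ≤ SFb k + SFb k * (k * SFb k) := by
          have := Nat.mul_le_mul_right (k * SFb k) hPcard
          omega
      _ = SFb k * (1 + k * SFb k) := by ring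
  -- F \ W is pairwise A-disjoint
  have hrest : (F \ W).card ≤ N / k := by
    apply card_le_of_pairwise_disjointA hk hF (Finset.sdiff_subset)
    intro S hS T hT hne
    rw [Finset.mem_sdiff] at hS hT
    by_contra hcon
    have hne2 : (sideA S ∩ sideA T).Nonempty := Finset.nonempty_iff_ne_empty.mpr hcon
    apply hS.2
    rw [hW, Finset.mem_filter]
    exact ⟨hS.1, T, hT.1, Ne.symm hne, hne2⟩
  have hsplit : (F \ W).card + W.card = F.card :=
    Finset.card_sdiff_add_card_eq_card (Finset.filter_subset _ _)
  omega

end Main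
section Swap

open SemiAux
open scoped Classical

variable {N k : ℕ}

/-- the swap embedding -/
def swapEmb (N : ℕ) : (Fin N ⊕ Fin N) ↪ (Fin N ⊕ Fin N) :=
  ⟨Sum.swap, Function.LeftInverse.injective (fun x => Sum.swap_swap x)⟩

/-- swap a set -/
def mS {N : ℕ} (S : Finset (Fin N ⊕ Fin N)) : Finset (Fin N ⊕ Fin N) :=
  S.map (swapEmb N)

lemma mS_mS (S : Finset (Fin N ⊕ Fin N)) : mS (mS S) = S := by
  ext x
  simp only [mS, swapEmb, Finset.mem_map, Function.Embedding.coeFn_mk]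
  constructor
  · rintro ⟨y, ⟨z, hz, rfl⟩, rfl⟩
    rwa [Sum.swap_swap]
  · intro hx
    exact ⟨x.swap, ⟨x, hx, rfl⟩, Sum.swap_swap x⟩

lemma mS_inj : Function.Injective (mS (N := N)) := by
  intro S T h
  rw [← mS_mS S, h, mS_mS]

lemma sideA_mS (S : Finset (Fin N ⊕ Fin N)) : sideA (mS S) = mS (sideB S) := by
  ext x
  simp only [mem_sideA, mem_sideB, mS, swapEmb, Finset.mem_map, Function.Embedding.coeFn_mk]
  constructor
  · rintro ⟨⟨y, hy, rfl⟩, hleft⟩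
    refine ⟨y, ⟨hy, ?_⟩, rfl⟩
    rwa [Sum.isLeft_swap] at hleft
  · rintro ⟨y, ⟨hy, hright⟩, rfl⟩
    exact ⟨⟨y, hy, rfl⟩, by rwa [Sum.isLeft_swap]⟩

lemma sideB_mS (S : Finset (Fin N ⊕ Fin N)) : sideB (mS S) = mS (sideA S) := by
  ext x
  simp only [mem_sideA, mem_sideB, mS, swapEmb, Finset.mem_map, Function.Embedding.coeFn_mk]
  constructor
  · rintro ⟨⟨y, hy, rfl⟩, hright⟩
    refine ⟨y, ⟨hy, ?_⟩, rfl⟩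
    rwa [Sum.isRight_swap] at hright
  · rintro ⟨y, ⟨hy, hleft⟩, rfl⟩
    exact ⟨⟨y, hy, rfl⟩, by rwa [Sum.isRight_swap]⟩

lemma mS_inter (S T : Finset (Fin N ⊕ Fin N)) : mS (S ∩ T) = mS S ∩ mS T :=
  Finset.map_inter S T

lemma mS_eq_empty {S : Finset (Fin N ⊕ Fin N)} : mS S = ∅ ↔ S = ∅ :=
  Finset.map_eq_empty

lemma mS_card (S : Finset (Fin N ⊕ Fin N)) : (mS S).card = S.card :=
  Finset.card_map _

lemma semi_swap {F : Finset (Finset (Fin N ⊕ Fin N))} (hF : Semiintersecting k N F) :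
    Semiintersecting k N (F.image mS) := by
  constructor
  · intro S hS
    obtain ⟨T, hT, rfl⟩ := Finset.mem_image.mp hS
    rw [sideA_mS, sideB_mS, mS_card, mS_card]
    exact ⟨(hF.1 T hT).2, (hF.1 T hT).1⟩
  · intro S hS T hT hne
    obtain ⟨S', hS', rfl⟩ := Finset.mem_image.mp hS
    obtain ⟨T', hT', rfl⟩ := Finset.mem_image.mp hT
    have hne' : S' ≠ T' := fun h => hne (h ▸ rfl)
    have hiff := hF.2 S' hS' T' hT' hne'
    rw [sideA_mS, sideA_mS, sideB_mS, sideB_mS, ← mS_inter, ← mS_inter,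
      mS_eq_empty, Ne, mS_eq_empty]
    tauto

/-- the full bound for any semiintersecting family -/
theorem family_bound {F : Finset (Finset (Fin N ⊕ Fin N))} (hk : 0 < k)
    (hF : Semiintersecting k N F) :
    F.card ≤ N / k + SFb k * (1 + k * SFb k) := by
  by_cases hA : ∃ D Y, D ⊆ F ∧ D.card = 2*k+1 ∧ IsSunflower D Y ∧ sideB Y = ∅
  · -- A-type sunflower exists, so no B-type sunflower exists; pass to the swap
    obtain ⟨Da, X, hDaF, hDacard, hsuna, hXB⟩ := hA
    have hNoB : ¬ ∃ D Y, D ⊆ F ∧ D.card = 2*k+1 ∧ IsSunflower D Y ∧ sideA Y = ∅ := by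
      rintro ⟨Db, Y, hDbF, hDbcard, hsunb, hYA⟩
      exact no_opposite_sunflowers hk hF hDaF hDacard hsuna hXB hDbF hDbcard hsunb hYA
    have hF' := semi_swap hF
    have hNoA' : ¬ ∃ D Y, D ⊆ F.image mS ∧ D.card = 2*k+1 ∧ IsSunflower D Y ∧
        sideB Y = ∅ := by
      rintro ⟨D', Y', hD'F, hcard, hsun, hYB⟩
      apply hNoB
      refine ⟨D'.image mS, mS Y', ?_, ?_, ?_, ?_⟩
      · intro S hS
        obtain ⟨T, hT, rfl⟩ := Finset.mem_image.mp hS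
        have hmem := hD'F hT
        obtain ⟨V, hV, rfl⟩ := Finset.mem_image.mp hmem
        rw [mS_mS]
        exact hV
      · rw [Finset.card_image_of_injective _ mS_inj, hcard]
      · intro S hS T hT hne
        obtain ⟨S', hS', rfl⟩ := Finset.mem_image.mp hS
        obtain ⟨T', hT', rfl⟩ := Finset.mem_image.mp hT
        have hne' : S' ≠ T' := fun h => hne (h ▸ rfl)
        rw [← mS_inter, hsun S' hS' T' hT' hne']
      · rw [sideA_mS, hYB]
        exact Finset.map_empty _
    calc F.card = (F.image mS).card := (Finset.card_image_of_injective _ mS_inj).symm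
      _ ≤ N / k + SFb k * (1 + k * SFb k) := case1 hk hF' hNoA'
  · exact case1 hk hF hA

end Swap

theorem semiMax_le_div_add_const (k : ℕ) (hk : 0 < k) :
    ∃ c : ℕ, ∀ N : ℕ, semiMax k N ≤ N / k + c := by
  refine ⟨SFb k * (1 + k * SFb k), fun N => ?_⟩
  apply csSup_le
  · refine ⟨0, ∅, ⟨?_, rfl⟩⟩
    exact ⟨fun S hS => absurd hS (Finset.notMem_empty S),
      fun S hS => absurd hS (Finset.notMem_empty S)⟩
  · rintro n ⟨F, hF, rfl⟩
    exact family_bound hk hF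
end

section
/- For every positive integer k and every prime power p ≤ k, f(k, pk) = p². -/
open Finset

set_option linter.unusedSectionVars false
set_option linter.unusedVariables false

lemma sideA_eq_image {N : ℕ} (S : Finset (Fin N ⊕ Fin N)) :
    sideA S = (univ.filter (fun a : Fin N => Sum.inl a ∈ S)).image Sum.inl := by
  ext x
  cases x with
  | inl a => simp [sideA]
  | inr b => simp [sideA]

lemma sideA_card_eq {N : ℕ} (S : Finset (Fin N ⊕ Fin N)) :
    (sideA S).card = (univ.filter (fun a : Fin N => Sum.inl a ∈ S)).card := by
  rw [sideA_eq_image, card_image_of_injective _ Sum.inl_injective]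

lemma sideB_subset_right {N : ℕ} (S : Finset (Fin N ⊕ Fin N)) :
    sideB S ⊆ univ.image Sum.inr := by
  intro x hx
  simp only [sideB, mem_filter] at hx
  cases x with
  | inl a => simp at hx
  | inr b => simp

lemma semi_upper (k p : ℕ) (hk : 0 < k) {F : Finset (Finset (Fin (p*k) ⊕ Fin (p*k)))}
    (h : Semiintersecting k (p*k) F) : F.card ≤ p ^ 2 := by
  obtain ⟨hcard, hint⟩ := h
  have key : ∀ a : Fin (p*k), (F.filter (fun S => Sum.inl a ∈ S)).card ≤ p := by
    intro a
    set Fa := F.filter (fun S => Sum.inl a ∈ S) with hFa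
    have hdisj : ∀ S ∈ Fa, ∀ T ∈ Fa, S ≠ T → Disjoint (sideB S) (sideB T) := by
      intro S hS T hT hne
      rw [hFa, mem_filter] at hS hT
      have h1 := hint S hS.1 T hT.1 hne
      have hA : sideA S ∩ sideA T ≠ ∅ := by
        intro hcon
        have : Sum.inl a ∈ sideA S ∩ sideA T := by
          simp [sideA, mem_inter, hS.2, hT.2]
        rw [hcon] at this; exact absurd this (notMem_empty _)
      have hB : sideB S ∩ sideB T = ∅ := by
        by_contra hB
        exact hA (h1.mpr hB)
      rw [Finset.disjoint_iff_inter_eq_empty]; exact hB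
    have hbu : (Fa.biUnion sideB).card = ∑ S ∈ Fa, (sideB S).card :=
      Finset.card_biUnion hdisj
    have hsub : Fa.biUnion sideB ⊆ univ.image Sum.inr := by
      intro x hx
      rw [mem_biUnion] at hx
      obtain ⟨S, _, hx⟩ := hx
      exact sideB_subset_right S hx
    have hle : ∑ S ∈ Fa, (sideB S).card ≤ p * k := by
      rw [← hbu]
      calc (Fa.biUnion sideB).card ≤ (univ.image Sum.inr : Finset (Fin (p*k) ⊕ Fin (p*k))).card :=
            Finset.card_le_card hsub
        _ = p * k := by
            rw [card_image_of_injective _ Sum.inr_injective, card_univ, Fintype.card_fin]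
    have heq : ∑ S ∈ Fa, (sideB S).card = Fa.card * k := by
      rw [Finset.sum_congr rfl (fun S hS => (hcard S (mem_filter.mp hS).1).2),
        Finset.sum_const, smul_eq_mul]
    rw [heq] at hle
    exact Nat.le_of_mul_le_mul_right hle hk
  have hdouble : F.card * k = ∑ a : Fin (p*k), (F.filter (fun S => Sum.inl a ∈ S)).card := by
    calc F.card * k = ∑ S ∈ F, (sideA S).card := by
          rw [Finset.sum_congr rfl (fun S hS => (hcard S hS).1), Finset.sum_const, smul_eq_mul]
      _ = ∑ S ∈ F, ∑ a : Fin (p*k), if Sum.inl a ∈ S then 1 else 0 := by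
          refine Finset.sum_congr rfl (fun S _ => ?_)
          rw [sideA_card_eq, Finset.card_filter]
      _ = ∑ a : Fin (p*k), ∑ S ∈ F, if Sum.inl a ∈ S then 1 else 0 := Finset.sum_comm
      _ = ∑ a : Fin (p*k), (F.filter (fun S => Sum.inl a ∈ S)).card := by
          refine Finset.sum_congr rfl (fun a _ => ?_)
          rw [Finset.card_filter]
  have : F.card * k ≤ p * k * p := by
    rw [hdouble]
    calc ∑ a : Fin (p*k), (F.filter (fun S => Sum.inl a ∈ S)).card
        ≤ ∑ _a : Fin (p*k), p := Finset.sum_le_sum (fun a _ => key a)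
      _ = p * k * p := by rw [Finset.sum_const, card_univ, Fintype.card_fin, smul_eq_mul]
  have h2 : F.card * k ≤ p ^ 2 * k := by ring_nf at this ⊢; linarith
  exact Nat.le_of_mul_le_mul_right h2 hk

section Construction

variable {K : Type} [Field K] [Fintype K] [DecidableEq K] {k N : ℕ}

def lineB (ι : K ↪ Fin k) (x y : K) : Finset (K × Fin k) :=
  univ.image (fun t => (t, ι (x * t + y)))

def padB (ι : K ↪ Fin k) (y : K) : Finset (K × Fin k) :=
  {y} ×ˢ (univ \ univ.image ι)

def partB (ι : K ↪ Fin k) (x y : K) : Finset (K × Fin k) := lineB ι x y ∪ padB ι y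

def partA (x : K) : Finset (K × Fin k) := {x} ×ˢ univ

def member (e : K × Fin k ≃ Fin N) (ι : K ↪ Fin k) (x y : K) : Finset (Fin N ⊕ Fin N) :=
  ((partA x).image (fun z => Sum.inl (e z))) ∪ ((partB ι x y).image (fun z => Sum.inr (e z)))

lemma mem_lineB (ι : K ↪ Fin k) (x y : K) (z : K × Fin k) :
    z ∈ lineB ι x y ↔ z.2 = ι (x * z.1 + y) := by
  simp only [lineB, mem_image, mem_univ, true_and]
  constructor
  · rintro ⟨t, rfl⟩; rfl
  · intro h; exact ⟨z.1, by rw [← h]⟩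

lemma mem_padB (ι : K ↪ Fin k) (y : K) (z : K × Fin k) :
    z ∈ padB ι y ↔ z.1 = y ∧ z.2 ∉ (univ : Finset K).image ι := by
  simp only [padB, mem_product, mem_singleton, mem_sdiff, mem_univ, true_and, mem_image]

lemma mem_partA (x : K) (z : K × Fin k) : z ∈ (partA x : Finset (K × Fin k)) ↔ z.1 = x := by
  simp only [partA, mem_product, mem_singleton, mem_univ, and_true]

lemma card_partA (hk : 0 < k) (x : K) : (partA x : Finset (K × Fin k)).card = k := by
  simp [partA]

lemma card_partB (hpk : Fintype.card K ≤ k) (ι : K ↪ Fin k) (x y : K) :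
    (partB ι x y).card = k := by
  have hdisj : Disjoint (lineB ι x y) (padB ι y) := by
    rw [Finset.disjoint_left]
    intro z hz hz'
    rw [mem_lineB] at hz
    rw [mem_padB] at hz'
    exact hz'.2 (by rw [hz]; exact mem_image_of_mem _ (mem_univ _))
  rw [partB, card_union_of_disjoint hdisj]
  have h1 : (lineB ι x y).card = Fintype.card K := by
    rw [lineB, card_image_of_injective, card_univ]
    intro a b hab
    exact (Prod.mk.injEq _ _ _ _).mp hab |>.1
  have h2 : (padB ι y).card = k - Fintype.card K := by
    rw [padB, card_product, card_singleton, one_mul, card_sdiff_of_subset (subset_univ _),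
      card_image_of_injective _ ι.injective, card_univ, card_univ, Fintype.card_fin]
  rw [h1, h2, Nat.add_sub_cancel' hpk]

lemma partA_inter_empty {x x' : K} (h : x ≠ x') :
    (partA x ∩ partA x' : Finset (K × Fin k)) = ∅ := by
  rw [Finset.eq_empty_iff_forall_notMem]
  intro z hz
  rw [mem_inter, mem_partA, mem_partA] at hz
  exact h (hz.1 ▸ hz.2 ▸ rfl)

lemma partB_inter_empty (ι : K ↪ Fin k) {x y y' : K} (h : y ≠ y') :
    partB ι x y ∩ partB ι x y' = ∅ := by
  rw [Finset.eq_empty_iff_forall_notMem]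
  intro z hz
  rw [mem_inter, partB, partB, mem_union, mem_union] at hz
  obtain ⟨h1 | h1, h2 | h2⟩ := hz
  · rw [mem_lineB] at h1 h2
    apply h
    have := ι.injective (h1 ▸ h2)
    exact add_left_cancel this
  · rw [mem_lineB] at h1; rw [mem_padB] at h2
    exact h2.2 (h1 ▸ mem_image_of_mem _ (mem_univ _))
  · rw [mem_lineB] at h2; rw [mem_padB] at h1
    exact h1.2 (h2 ▸ mem_image_of_mem _ (mem_univ _))
  · rw [mem_padB] at h1 h2
    exact h (h1.1 ▸ h2.1 ▸ rfl)

lemma partB_inter_nonempty (ι : K ↪ Fin k) {x x' : K} (y y' : K) (h : x ≠ x') :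
    (partB ι x y ∩ partB ι x' y').Nonempty := by
  set t := (y' - y) / (x - x') with ht
  have hx : x - x' ≠ 0 := sub_ne_zero.mpr h
  have heq : x * t + y = x' * t + y' := by
    have h3 : (x - x') * t = y' - y := by rw [ht]; field_simp
    linear_combination h3
  refine ⟨(t, ι (x * t + y)), ?_⟩
  rw [mem_inter, partB, partB, mem_union, mem_union]
  constructor
  · left; rw [mem_lineB]
  · left; rw [mem_lineB]; simp only; rw [heq]

end Construction

section Construction2
variable {K : Type} [Field K] [Fintype K] [DecidableEq K] {k N : ℕ}

lemma inl_e_inj (e : K × Fin k ≃ Fin N) :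
    Function.Injective (fun z : K × Fin k => (Sum.inl (e z) : Fin N ⊕ Fin N)) :=
  fun a b h => e.injective (Sum.inl_injective h)

lemma inr_e_inj (e : K × Fin k ≃ Fin N) :
    Function.Injective (fun z : K × Fin k => (Sum.inr (e z) : Fin N ⊕ Fin N)) :=
  fun a b h => e.injective (Sum.inr_injective h)

lemma sideA_member (e : K × Fin k ≃ Fin N) (ι : K ↪ Fin k) (x y : K) :
    sideA (member e ι x y) = (partA x).image (fun z => Sum.inl (e z)) := by
  rw [sideA, member, filter_union]
  rw [Finset.filter_true_of_mem (fun z hz => by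
    rw [mem_image] at hz; obtain ⟨w, _, rfl⟩ := hz; rfl)]
  rw [Finset.filter_false_of_mem (fun z hz => by
    rw [mem_image] at hz; obtain ⟨w, _, rfl⟩ := hz; simp)]
  exact union_empty _

lemma sideB_member (e : K × Fin k ≃ Fin N) (ι : K ↪ Fin k) (x y : K) :
    sideB (member e ι x y) = (partB ι x y).image (fun z => Sum.inr (e z)) := by
  rw [sideB, member, filter_union]
  rw [Finset.filter_false_of_mem (fun z hz => by
    rw [mem_image] at hz; obtain ⟨w, _, rfl⟩ := hz; simp)]
  rw [Finset.filter_true_of_mem (fun z hz => by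
    rw [mem_image] at hz; obtain ⟨w, _, rfl⟩ := hz; rfl)]
  exact empty_union _

lemma member_inj (e : K × Fin k ≃ Fin N) (ι : K ↪ Fin k) (hk : 0 < k)
    (hpk : Fintype.card K ≤ k) :
    Function.Injective (fun z : K × K => member e ι z.1 z.2) := by
  rintro ⟨x, y⟩ ⟨x', y'⟩ h
  simp only at h
  have hA := congrArg sideA h
  have hB := congrArg sideB h
  rw [sideA_member, sideA_member] at hA
  rw [sideB_member, sideB_member] at hB
  have hx : x = x' := by
    by_contra hx
    have h1 : ((partA x ∩ partA x' : Finset (K × Fin k)).image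
        (fun z => (Sum.inl (e z) : Fin N ⊕ Fin N))).card = k := by
      rw [Finset.image_inter _ _ (inl_e_inj e), hA, inter_self,
        card_image_of_injective _ (inl_e_inj e), card_partA hk]
    rw [partA_inter_empty hx, image_empty, card_empty] at h1
    exact hk.ne h1
  subst hx
  have hy : y = y' := by
    by_contra hy
    have h1 : ((partB ι x y ∩ partB ι x y').image
        (fun z => (Sum.inr (e z) : Fin N ⊕ Fin N))).card = k := by
      rw [Finset.image_inter _ _ (inr_e_inj e), hB, inter_self,
        card_image_of_injective _ (inr_e_inj e), card_partB hpk]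
    rw [partB_inter_empty ι hy, image_empty, card_empty] at h1
    exact hk.ne h1
  rw [hy]

lemma semi_lower_field (e : K × Fin k ≃ Fin N) (ι : K ↪ Fin k) (hk : 0 < k)
    (hpk : Fintype.card K ≤ k) :
    ∃ F : Finset (Finset (Fin N ⊕ Fin N)), Semiintersecting k N F ∧
      F.card = (Fintype.card K) ^ 2 := by
  refine ⟨(univ : Finset (K × K)).image (fun z => member e ι z.1 z.2), ⟨?_, ?_⟩, ?_⟩
  · intro S hS
    rw [mem_image] at hS
    obtain ⟨⟨x, y⟩, _, rfl⟩ := hS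
    constructor
    · rw [sideA_member, card_image_of_injective _ (inl_e_inj e), card_partA hk]
    · rw [sideB_member, card_image_of_injective _ (inr_e_inj e), card_partB hpk]
  · intro S hS T hT hne
    rw [mem_image] at hS hT
    obtain ⟨⟨x, y⟩, _, rfl⟩ := hS
    obtain ⟨⟨x', y'⟩, _, rfl⟩ := hT
    by_cases hx : x = x'
    · subst hx
      have hy : y ≠ y' := fun hy => hne (by rw [hy])
      have hAne : sideA (member e ι x y) ∩ sideA (member e ι x y') ≠ ∅ := by
        rw [sideA_member, sideA_member, ← Finset.image_inter _ _ (inl_e_inj e), inter_self]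
        intro hcon
        have h2 : (partA x : Finset (K × Fin k)).card = 0 := by
          rw [← card_image_of_injective (partA x) (inl_e_inj e), hcon, card_empty]
        rw [card_partA hk x] at h2
        exact hk.ne h2.symm
      have hBe : sideB (member e ι x y) ∩ sideB (member e ι x y') = ∅ := by
        rw [sideB_member, sideB_member, ← Finset.image_inter _ _ (inr_e_inj e),
          partB_inter_empty ι hy, image_empty]
      constructor
      · intro hcon; exact absurd hcon hAne
      · intro hcon; exact absurd hBe hcon
    · constructor
      · intro _
        rw [sideB_member, sideB_member, ← Finset.image_inter _ _ (inr_e_inj e)]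
        obtain ⟨z, hz⟩ := partB_inter_nonempty ι y y' hx
        intro hcon
        rw [Finset.eq_empty_iff_forall_notMem] at hcon
        exact hcon _ (mem_image_of_mem _ hz)
      · intro _
        rw [sideA_member, sideA_member, ← Finset.image_inter _ _ (inl_e_inj e),
          partA_inter_empty hx, image_empty]
  · rw [card_image_of_injective _ (member_inj e ι hk hpk), card_univ, Fintype.card_prod, sq]

end Construction2


theorem semiMax_pk_eq (k p : ℕ) (hk : 0 < k) (hp : IsPrimePow p) (hpk : p ≤ k) :
    semiMax k (p * k) = p ^ 2 := by
  obtain ⟨ℓ, n, hℓ, hn, rfl⟩ := hp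
  haveI : Fact ℓ.Prime := ⟨hℓ.nat_prime⟩
  classical
  haveI : Fintype (GaloisField ℓ n) := Fintype.ofFinite _
  have hcard : Fintype.card (GaloisField ℓ n) = ℓ ^ n := by
    rw [← Nat.card_eq_fintype_card]; exact GaloisField.card ℓ n hn.ne'
  have e : GaloisField ℓ n × Fin k ≃ Fin (ℓ ^ n * k) :=
    Fintype.equivFinOfCardEq (by rw [Fintype.card_prod, hcard, Fintype.card_fin])
  have hι : Nonempty (GaloisField ℓ n ↪ Fin k) := by
    rw [Function.Embedding.nonempty_iff_card_le, hcard, Fintype.card_fin]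
    exact hpk
  obtain ⟨ι⟩ := hι
  obtain ⟨F, hF, hFcard⟩ := semi_lower_field e ι hk (by rw [hcard]; exact hpk)
  rw [hcard] at hFcard
  have hmem : (ℓ ^ n) ^ 2 ∈ {m | ∃ F : Finset (Finset (Fin (ℓ^n*k) ⊕ Fin (ℓ^n*k))),
      Semiintersecting k (ℓ^n*k) F ∧ F.card = m} := ⟨F, hF, hFcard⟩
  have hbdd : ∀ m ∈ {m | ∃ F : Finset (Finset (Fin (ℓ^n*k) ⊕ Fin (ℓ^n*k))),
      Semiintersecting k (ℓ^n*k) F ∧ F.card = m}, m ≤ (ℓ ^ n) ^ 2 := by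
    rintro m ⟨G, hG, rfl⟩
    exact semi_upper k (ℓ ^ n) hk hG
  exact le_antisymm (csSup_le ⟨_, hmem⟩ hbdd) (le_csSup ⟨_, hbdd⟩ hmem)
end
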